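/- Cyclic-map invariance under an adjacent unprimed–primed swap: let R′ = M ∪̇ N′ be a marked alphabet on {1,…,m+n} in which r ∈ M is the k-th smallest unprimed letter and r+1 ∈ N is the ℓ-th smallest primed letter, and let R″ be the marked alphabet obtained from R′ by instead taking r primed and r+1 unprimed (so that in R″, r is the ℓ-th smallest primed letter and r+1 the k-th smallest unprimed letter), all other letters retaining their markings. Then for all partitions μ ⊆ λ, all x = (x_1,…,x_m), y = (y_1,…,y_n) and all doubly infinite families a = (a_t)_{t∈ℤ} in a commutative ring, s^{R′}_{λ/μ}(x,y|a) = s^{R″}_{λ/μ}(x,y|a). -/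

import Mathlib

namespace SuperSchur

variable {A : Type*} [CommRing A]

/-- The content of a box `(i, j)` (rows and columns indexed from 0;
row `i` occupies columns `μ_i ≤ j < λ_i`, so the content is `j - i`). -/
def content (p : ℕ × ℕ) : ℤ := (p.2 : ℤ) - (p.1 : ℤ)

/-- The cells of the skew Young diagram `F^{λ/μ}` (0-indexed rows and columns). -/
def cells (lam mu : List ℕ) : Finset (ℕ × ℕ) :=
  (Finset.range lam.length).biUnion fun i =>
    (Finset.Ico (mu.getD i 0) (lam.getD i 0)).image fun j => (i, j)

/-- `l` is a partition: a weakly decreasing list of positive integers. -/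
def IsPartition (l : List ℕ) : Prop := l.Pairwise (· ≥ ·) ∧ ∀ x ∈ l, 0 < x

/-- `μ ⊆ λ`. -/
def Contained (mu lam : List ℕ) : Prop := ∀ i, mu.getD i 0 ≤ lam.getD i 0

/-- `T` is a skew supertableau on the cell set `C` over the marked alphabet `Fin NA`
(letters in their natural order), where `prm r = true` means the letter `r` is primed:
entries weakly increase along rows and down columns, no two equal unprimed entries lie
in the same column, and no two equal primed entries lie in the same row. -/
def IsSuperTab {NA : ℕ} (C : Finset (ℕ × ℕ)) (prm : Fin NA → Bool)
    (T : {p // p ∈ C} → Fin NA) : Prop :=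
  (∀ u v : {p // p ∈ C}, u.1.1 = v.1.1 → u.1.2 ≤ v.1.2 → T u ≤ T v) ∧
  (∀ u v : {p // p ∈ C}, u.1.2 = v.1.2 → u.1.1 ≤ v.1.1 → T u ≤ T v) ∧
  (∀ u v : {p // p ∈ C}, u.1.2 = v.1.2 → u.1.1 ≠ v.1.1 → prm (T u) = false → T u ≠ T v) ∧
  (∀ u v : {p // p ∈ C}, u.1.1 = v.1.1 → u.1.2 ≠ v.1.2 → prm (T u) = true → T u ≠ T v)

open Classical in
/-- Generic weighted sum over all skew supertableaux on `C`: the weight of the letter `r`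
placed in a box of content `c` is `w r c`. -/
noncomputable def tabSum {NA : ℕ} (C : Finset (ℕ × ℕ)) (prm : Fin NA → Bool)
    (w : Fin NA → ℤ → A) : A :=
  ∑ T ∈ Finset.univ.filter (fun T : {p // p ∈ C} → Fin NA => IsSuperTab C prm T),
    ∏ u : {p // p ∈ C}, w (T u) (content u.1)

/-- The (1-based) index of the letter `r` among the letters with the same marking:
if `r` is the k-th smallest unprimed letter then `idx prm r = k`, and similarly
for primed letters. -/
def idx {NA : ℕ} (prm : Fin NA → Bool) (r : Fin NA) : ℕ :=
  (Finset.univ.filter fun r' => prm r' = prm r ∧ r' ≤ r).card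

/-- `σ(r) = #{i ∈ M : i ≤ r} - #{j ∈ N : j ≤ r}`, plus `1` if `r` is primed. -/
def sigma {NA : ℕ} (prm : Fin NA → Bool) (r : Fin NA) : ℤ :=
  ((Finset.univ.filter fun r' : Fin NA => prm r' = false ∧ r' ≤ r).card : ℤ)
    - ((Finset.univ.filter fun r' : Fin NA => prm r' = true ∧ r' ≤ r).card : ℤ)
    + (if prm r then 1 else 0)

/-- Ninth-variation weights: the k-th unprimed letter in a box of content `c`
carries weight `X k c`, and the ℓ-th primed letter carries `Y ℓ c`. -/
def wNinth {m n NA : ℕ} (prm : Fin NA → Bool) (X : Fin m → ℤ → A) (Y : Fin n → ℤ → A) :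
    Fin NA → ℤ → A := fun r c =>
  if prm r then (if h : idx prm r - 1 < n then Y ⟨idx prm r - 1, h⟩ c else 0)
  else (if h : idx prm r - 1 < m then X ⟨idx prm r - 1, h⟩ c else 0)

/-- Factorial supersymmetric weights: the k-th unprimed letter `r` in a box of content `c`
carries weight `x k + a (σ(r) + c)`, and the ℓ-th primed letter `r` carries
`y ℓ - a (σ(r) + c)`. -/
def wFact {m n NA : ℕ} (prm : Fin NA → Bool) (x : Fin m → A) (y : Fin n → A) (a : ℤ → A) :
    Fin NA → ℤ → A := fun r c =>
  if prm r then
    (if h : idx prm r - 1 < n then y ⟨idx prm r - 1, h⟩ else 0) - a (sigma prm r + c)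
  else
    (if h : idx prm r - 1 < m then x ⟨idx prm r - 1, h⟩ else 0) + a (sigma prm r + c)

/-- The marked alphabet `1 < 2 < ⋯ < m < 1′ < 2′ < ⋯ < n′`. -/
def prmFirst (m n : ℕ) : Fin (m + n) → Bool := fun r => decide (m ≤ (r : ℕ))

/-- The classical (first variation) supersymmetric skew Schur function `s_{λ/μ}(x,y)`. -/
noncomputable def superSchur (lam mu : List ℕ) {m n : ℕ} (x : Fin m → A) (y : Fin n → A) : A :=
  tabSum (cells lam mu) (prmFirst m n) (wNinth (prmFirst m n) (fun k _ => x k) (fun l _ => y l))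

/-- The row (counted from the top, 0-based) of the box of content `c` in the canonical
realisation of the segment of the cutting strip ending at content `d`:
the number of vertical steps strictly between `c` and `d`. -/
noncomputable def ribRow (dir : ℤ → Bool) (d c : ℤ) : ℕ :=
  ((Finset.Ioc c d).filter fun c' => dir c' = true).card

/-- The shift `m(p,q)`: the content (within the cutting strip) of the box of the ribbon
`φ_{ad}` that lies on the main diagonal of the skew diagram whose outer rim is `φ_{ad}`. -/
noncomputable def mShift (dir : ℤ → Bool) (a d : ℤ) : ℤ := a + (ribRow dir d a : ℤ)

/-- The ribbon `φ_{ad}` of the cutting strip, realised canonically as a skew diagram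
in its own right (its box of cutting-strip content `c` gets standard content
`c - mShift dir a d`). -/
noncomputable def ribbonCells (dir : ℤ → Bool) (a d : ℤ) : Finset (ℕ × ℕ) :=
  (Finset.Icc a d).image fun c =>
    (ribRow dir d c, (c + (ribRow dir d c : ℤ) - mShift dir a d).toNat)

/-- The cell set `S` coincides in shape and contents with the segment `φ_{ab}` of the
cutting strip described by `dir` (where `dir c = true` iff the box of content `c - 1`
lies below the box of content `c`, and `dir c = false` iff it lies to its left). -/
def StripMatches (dir : ℤ → Bool) (a b : ℤ) (S : Finset (ℕ × ℕ)) : Prop :=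
  (∀ c : ℤ, (a ≤ c ∧ c ≤ b) ↔ ∃ u ∈ S, content u = c) ∧
  (∀ u ∈ S, ∀ v ∈ S, content u = content v → u = v) ∧
  (∀ u ∈ S, ∀ v ∈ S, content v = content u + 1 →
    if dir (content v) then v.1 + 1 = u.1 ∧ v.2 = u.2 else v.1 = u.1 ∧ u.2 + 1 = v.2)

/-- `(dir, ab, θ)` is an outside decomposition of `F^{λ/μ}`: the strips `θ p` are
pairwise disjoint with union the whole diagram, each `θ p` coincides in shape
and contents with the segment `φ_{(ab p).1, (ab p).2}` of the common cutting strip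
described by `dir`, the starting box of each strip lies on the left or bottom boundary,
the ending box of each strip lies on the right or top boundary, and the cutting strip
contains a box of every relevant content occurring in the diagram. -/
def OutsideDecomp (lam mu : List ℕ) {s : ℕ} (dir : ℤ → Bool)
    (ab : Fin s → ℤ × ℤ) (θ : Fin s → Finset (ℕ × ℕ)) : Prop :=
  (∀ p q : Fin s, p ≠ q → Disjoint (θ p) (θ q)) ∧
  (Finset.univ.biUnion θ = cells lam mu) ∧
  (∀ p : Fin s, StripMatches dir (ab p).1 (ab p).2 (θ p)) ∧
  (∀ p : Fin s, ∀ u ∈ θ p, content u = (ab p).1 →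
    u.2 = 0 ∨ (u.1, u.2 - 1) ∉ cells lam mu ∨ (u.1 + 1, u.2) ∉ cells lam mu) ∧
  (∀ p : Fin s, ∀ u ∈ θ p, content u = (ab p).2 →
    (u.1, u.2 + 1) ∉ cells lam mu ∨ u.1 = 0 ∨ (u.1 - 1, u.2) ∉ cells lam mu) ∧
  (∀ p q : Fin s, ∀ c : ℤ, (ab p).1 ≤ c → c ≤ (ab q).2 → ∃ u ∈ cells lam mu, content u = c)

/-- Two boxes are edgewise adjacent. -/
def CellAdj (u v : ℕ × ℕ) : Prop :=
  (u.1 = v.1 ∧ (u.2 + 1 = v.2 ∨ v.2 + 1 = u.2)) ∨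
  (u.2 = v.2 ∧ (u.1 + 1 = v.1 ∨ v.1 + 1 = u.1))

/-- `C` is edgewise connected. -/
def ConnectedCells (C : Finset (ℕ × ℕ)) : Prop :=
  ∀ u ∈ C, ∀ v ∈ C,
    Relation.ReflTransGen (fun p q => p ∈ C ∧ q ∈ C ∧ CellAdj p q) u v

/-- `C` contains no 2×2 block of boxes. -/
def NoTwoByTwo (C : Finset (ℕ × ℕ)) : Prop :=
  ∀ i j : ℕ, ¬((i, j) ∈ C ∧ (i + 1, j) ∈ C ∧ (i, j + 1) ∈ C ∧ (i + 1, j + 1) ∈ C)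

/-- `C` is a ribbon: nonempty, edgewise connected, with no 2×2 block of boxes. -/
def IsRibbon (C : Finset (ℕ × ℕ)) : Prop :=
  C.Nonempty ∧ ConnectedCells C ∧ NoTwoByTwo C

/-- `T` is an ordered Young tableau on `C`: entries weakly increase along rows and
down columns, and strictly increase down diagonals. -/
def IsOYT {nL : ℕ} (C : Finset (ℕ × ℕ)) (T : {p // p ∈ C} → Fin nL) : Prop :=
  (∀ u v : {p // p ∈ C}, u.1.1 = v.1.1 → u.1.2 ≤ v.1.2 → T u ≤ T v) ∧
  (∀ u v : {p // p ∈ C}, u.1.2 = v.1.2 → u.1.1 ≤ v.1.1 → T u ≤ T v) ∧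
  (∀ u v : {p // p ∈ C}, u.1.1 + 1 = v.1.1 → u.1.2 + 1 = v.1.2 → T u < T v)

/-- The number `h(T)` of horizontally adjacent pairs of equal entries. -/
def horizPairs {nL : ℕ} (C : Finset (ℕ × ℕ)) (T : {p // p ∈ C} → Fin nL) : ℕ :=
  (Finset.univ.filter fun uv : {p // p ∈ C} × {p // p ∈ C} =>
    uv.1.1.1 = uv.2.1.1 ∧ uv.1.1.2 + 1 = uv.2.1.2 ∧ T uv.1 = T uv.2).card

/-- The number `v(T)` of vertically adjacent pairs of equal entries. -/
def vertPairs {nL : ℕ} (C : Finset (ℕ × ℕ)) (T : {p // p ∈ C} → Fin nL) : ℕ :=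
  (Finset.univ.filter fun uv : {p // p ∈ C} × {p // p ∈ C} =>
    uv.1.1.2 = uv.2.1.2 ∧ uv.1.1.1 + 1 = uv.2.1.1 ∧ T uv.1 = T uv.2).card

open Classical in
/-- Bachmann's ordered-Young-tableau Schur function of the cell set `C`. -/
noncomputable def bacSum (C : Finset (ℕ × ℕ)) {nL : ℕ} (F : Fin nL → ℤ → A) (t : A) : A :=
  ∑ T ∈ Finset.univ.filter (fun T : {p // p ∈ C} → Fin nL => IsOYT C T),
    t ^ vertPairs C T * (1 - t) ^ horizPairs C T *
      ∏ u : {p // p ∈ C}, F (T u) (content u.1)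

/-- Molev's factorial supersymmetric weights on the alphabet
`n′ < ⋯ < 2′ < 1′ < 1 < 2 < ⋯ < m` (position `p < n` is the letter `(n-p)′`,
position `n + k - 1` is the letter `k`): the letter `k` in a box of content `c`
carries weight `x k + a (k + c)` and the letter `ℓ′` carries `y ℓ - a (ℓ + c)`. -/
def wMol {m n : ℕ} (x : Fin m → A) (y : Fin n → A) (a : ℤ → A) : Fin (m + n) → ℤ → A :=
  fun r c =>
    if h : (r : ℕ) < n then
      y ⟨n - 1 - (r : ℕ), by omega⟩ - a (((n : ℤ) - ((r : ℕ) : ℤ)) + c)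
    else
      x ⟨(r : ℕ) - n, by have := r.isLt; omega⟩ + a ((((r : ℕ) : ℤ) - (n : ℤ) + 1) + c)




/-! ### Auxiliary development for `adjacent_swap_invariance` -/

section AdjacentSwapAux

open Finset

variable {NA : ℕ}

/-- Context for an adjacent unprimed/primed swap of letters `rf < sf = rf + 1`. -/
structure SwapCtx (prm prm' : Fin NA → Bool) (rf sf : Fin NA) : Prop where
  hcons : (rf : ℕ) + 1 = (sf : ℕ)
  hru : prm rf = false
  hrp : prm sf = true
  hru' : prm' rf = true
  hrp' : prm' sf = false
  hout : ∀ t : Fin NA, t ≠ rf → t ≠ sf → prm' t = prm t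

variable {prm prm' : Fin NA → Bool} {rf sf : Fin NA}

namespace SwapCtx

theorem rf_ne_sf (hc : SwapCtx prm prm' rf sf) : rf ≠ sf := by
  have := hc.hcons
  intro h; rw [h] at this; omega

theorem lt_or_gt_of_out (hc : SwapCtx prm prm' rf sf) {t : Fin NA} (h1 : t ≠ rf) (h2 : t ≠ sf) :
    (t : ℕ) < (rf : ℕ) ∨ (sf : ℕ) < (t : ℕ) := by
  have e1 : (t : ℕ) ≠ (rf : ℕ) := fun h => h1 (Fin.ext h)
  have e2 : (t : ℕ) ≠ (sf : ℕ) := fun h => h2 (Fin.ext h)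
  have := hc.hcons
  omega

theorem prm'_swap (hc : SwapCtx prm prm' rf sf) (x : Fin NA) :
    prm' (Equiv.swap rf sf x) = prm x := by
  rcases eq_or_ne x rf with rfl | h1
  · rw [Equiv.swap_apply_left, hc.hrp', hc.hru]
  rcases eq_or_ne x sf with rfl | h2
  · rw [Equiv.swap_apply_right, hc.hru', hc.hrp]
  · rw [Equiv.swap_apply_of_ne_of_ne h1 h2, hc.hout x h1 h2]

theorem prm_swap (hc : SwapCtx prm prm' rf sf) (x : Fin NA) :
    prm (Equiv.swap rf sf x) = prm' x := by
  have h := hc.prm'_swap (Equiv.swap rf sf x)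
  rw [Equiv.swap_apply_self] at h
  exact h.symm

/-- `idx prm rf = idx prm' sf`. -/
theorem idx_rf (hc : SwapCtx prm prm' rf sf) : idx prm rf = idx prm' sf := by
  have hcons := hc.hcons
  simp only [idx, hc.hru, hc.hrp']
  apply Finset.card_bij' (fun a _ => Equiv.swap rf sf a) (fun a _ => Equiv.swap rf sf a)
  · intro a ha
    simp only [mem_filter, mem_univ, true_and] at ha ⊢
    refine ⟨by rw [hc.prm'_swap a, ha.1], ?_⟩
    rcases eq_or_ne a rf with rfl | h2
    · rw [Equiv.swap_apply_left]
    rcases eq_or_ne a sf with rfl | h3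
    · rw [Equiv.swap_apply_right]; exact Fin.le_def.2 (by omega)
    · rw [Equiv.swap_apply_of_ne_of_ne h2 h3]
      exact le_trans ha.2 (Fin.le_def.2 (by omega))
  · intro a ha
    simp only [mem_filter, mem_univ, true_and] at ha ⊢
    refine ⟨by rw [hc.prm_swap a, ha.1], ?_⟩
    have h2 : a ≠ rf := by
      intro h; rw [h, hc.hru'] at ha; exact absurd ha.1 (by simp)
    rcases eq_or_ne a sf with rfl | h3
    · rw [Equiv.swap_apply_right]
    · rw [Equiv.swap_apply_of_ne_of_ne h2 h3]
      have e2 : (a : ℕ) ≠ (rf : ℕ) := fun h => h2 (Fin.ext h)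
      have e3 : (a : ℕ) ≠ (sf : ℕ) := fun h => h3 (Fin.ext h)
      have h4 := Fin.le_def.1 ha.2
      exact Fin.le_def.2 (by omega)
  · intro a _; exact Equiv.swap_apply_self _ _ _
  · intro a _; exact Equiv.swap_apply_self _ _ _

/-- `idx prm sf = idx prm' rf`. -/
theorem idx_sf (hc : SwapCtx prm prm' rf sf) : idx prm sf = idx prm' rf := by
  have hcons := hc.hcons
  simp only [idx, hc.hrp, hc.hru']
  apply Finset.card_bij' (fun a _ => Equiv.swap rf sf a) (fun a _ => Equiv.swap rf sf a)
  · intro a ha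
    simp only [mem_filter, mem_univ, true_and] at ha ⊢
    refine ⟨by rw [hc.prm'_swap a, ha.1], ?_⟩
    have h2 : a ≠ rf := by
      intro h; rw [h, hc.hru] at ha; exact absurd ha.1 (by simp)
    rcases eq_or_ne a sf with rfl | h3
    · rw [Equiv.swap_apply_right]
    · rw [Equiv.swap_apply_of_ne_of_ne h2 h3]
      have e2 : (a : ℕ) ≠ (rf : ℕ) := fun h => h2 (Fin.ext h)
      have e3 : (a : ℕ) ≠ (sf : ℕ) := fun h => h3 (Fin.ext h)
      have h4 := Fin.le_def.1 ha.2
      exact Fin.le_def.2 (by omega)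
  · intro a ha
    simp only [mem_filter, mem_univ, true_and] at ha ⊢
    refine ⟨by rw [hc.prm_swap a, ha.1], ?_⟩
    rcases eq_or_ne a rf with rfl | h2
    · rw [Equiv.swap_apply_left]
    · have h3 : a ≠ sf := by
        intro h
        have h4 := Fin.le_def.1 ha.2
        rw [h] at h4; omega
      rw [Equiv.swap_apply_of_ne_of_ne h2 h3]
      exact le_trans ha.2 (Fin.le_def.2 (by omega))
  · intro a _; exact Equiv.swap_apply_self _ _ _
  · intro a _; exact Equiv.swap_apply_self _ _ _

theorem filter_sets_s1 (hc : SwapCtx prm prm' rf sf) :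
    (univ.filter fun t : Fin NA => prm t = false ∧ t ≤ sf)
      = (univ.filter fun t : Fin NA => prm t = false ∧ t ≤ rf) := by
  have hcons := hc.hcons
  ext t
  simp only [mem_filter, mem_univ, true_and, Fin.le_def]
  constructor
  · rintro ⟨h1, h2⟩
    refine ⟨h1, ?_⟩
    rcases eq_or_ne (t : ℕ) (sf : ℕ) with he | he
    · exfalso
      have ht : t = sf := Fin.ext he
      rw [ht, hc.hrp] at h1
      exact absurd h1 (by simp)
    · omega
  · rintro ⟨h1, h2⟩; exact ⟨h1, by omega⟩

theorem filter_sets_s2 (hc : SwapCtx prm prm' rf sf) :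
    (univ.filter fun t : Fin NA => prm t = true ∧ t ≤ sf)
      = insert sf (univ.filter fun t : Fin NA => prm t = true ∧ t ≤ rf) := by
  have hcons := hc.hcons
  ext t
  simp only [mem_filter, mem_univ, true_and, mem_insert, Fin.le_def]
  constructor
  · rintro ⟨h1, h2⟩
    rcases eq_or_ne (t : ℕ) (sf : ℕ) with he | he
    · exact Or.inl (Fin.ext he)
    · exact Or.inr ⟨h1, by omega⟩
  · rintro (rfl | ⟨h1, h2⟩)
    · exact ⟨hc.hrp, le_rfl⟩
    · exact ⟨h1, by omega⟩

theorem filter_sets_s3 (hc : SwapCtx prm prm' rf sf) :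
    (univ.filter fun t : Fin NA => prm' t = false ∧ t ≤ sf)
      = insert sf (univ.filter fun t : Fin NA => prm' t = false ∧ t ≤ rf) := by
  have hcons := hc.hcons
  ext t
  simp only [mem_filter, mem_univ, true_and, mem_insert, Fin.le_def]
  constructor
  · rintro ⟨h1, h2⟩
    rcases eq_or_ne (t : ℕ) (sf : ℕ) with he | he
    · exact Or.inl (Fin.ext he)
    · exact Or.inr ⟨h1, by omega⟩
  · rintro (rfl | ⟨h1, h2⟩)
    · exact ⟨hc.hrp', le_rfl⟩
    · exact ⟨h1, by omega⟩

theorem filter_sets_s4 (hc : SwapCtx prm prm' rf sf) :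
    (univ.filter fun t : Fin NA => prm' t = true ∧ t ≤ sf)
      = (univ.filter fun t : Fin NA => prm' t = true ∧ t ≤ rf) := by
  have hcons := hc.hcons
  ext t
  simp only [mem_filter, mem_univ, true_and, Fin.le_def]
  constructor
  · rintro ⟨h1, h2⟩
    refine ⟨h1, ?_⟩
    rcases eq_or_ne (t : ℕ) (sf : ℕ) with he | he
    · exfalso
      have ht : t = sf := Fin.ext he
      rw [ht, hc.hrp'] at h1
      exact absurd h1 (by simp)
    · omega
  · rintro ⟨h1, h2⟩; exact ⟨h1, by omega⟩

theorem filter_sets_s5 (hc : SwapCtx prm prm' rf sf) :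
    (univ.filter fun t : Fin NA => prm t = false ∧ t ≤ rf)
      = insert rf (univ.filter fun t : Fin NA => prm' t = false ∧ t ≤ rf) := by
  have hcons := hc.hcons
  ext t
  simp only [mem_filter, mem_univ, true_and, mem_insert, Fin.le_def]
  constructor
  · rintro ⟨h1, h2⟩
    rcases eq_or_ne (t : ℕ) (rf : ℕ) with he | he
    · exact Or.inl (Fin.ext he)
    · refine Or.inr ⟨?_, h2⟩
      rw [hc.hout t (fun h => he (by rw [h])) (fun h => by rw [h] at h2; omega)]
      exact h1
  · rintro (rfl | ⟨h1, h2⟩)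
    · exact ⟨hc.hru, le_rfl⟩
    · have he : (t : ℕ) ≠ (rf : ℕ) := by
        intro h
        have ht : t = rf := Fin.ext h
        rw [ht, hc.hru'] at h1
        exact absurd h1 (by simp)
      refine ⟨?_, h2⟩
      rw [← hc.hout t (fun h => he (by rw [h])) (fun h => by rw [h] at h2; omega)]
      exact h1

theorem filter_sets_s6 (hc : SwapCtx prm prm' rf sf) :
    (univ.filter fun t : Fin NA => prm' t = true ∧ t ≤ rf)
      = insert rf (univ.filter fun t : Fin NA => prm t = true ∧ t ≤ rf) := by
  have hcons := hc.hcons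
  ext t
  simp only [mem_filter, mem_univ, true_and, mem_insert, Fin.le_def]
  constructor
  · rintro ⟨h1, h2⟩
    rcases eq_or_ne (t : ℕ) (rf : ℕ) with he | he
    · exact Or.inl (Fin.ext he)
    · refine Or.inr ⟨?_, h2⟩
      rw [← hc.hout t (fun h => he (by rw [h])) (fun h => by rw [h] at h2; omega)]
      exact h1
  · rintro (rfl | ⟨h1, h2⟩)
    · exact ⟨hc.hru', le_rfl⟩
    · have he : (t : ℕ) ≠ (rf : ℕ) := by
        intro h
        have ht : t = rf := Fin.ext h
        rw [ht, hc.hru] at h1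
        exact absurd h1 (by simp)
      refine ⟨?_, h2⟩
      rw [hc.hout t (fun h => he (by rw [h])) (fun h => by rw [h] at h2; omega)]
      exact h1

theorem sf_not_mem_le_rf (hc : SwapCtx prm prm' rf sf) (q : Fin NA → Bool) (b : Bool) :
    sf ∉ univ.filter fun t : Fin NA => q t = b ∧ t ≤ rf := by
  have := hc.hcons
  simp only [mem_filter, mem_univ, true_and, Fin.le_def, not_and]
  intro _; omega

theorem sigma_vals (hc : SwapCtx prm prm' rf sf) :
    sigma prm sf = sigma prm rf ∧ sigma prm' sf = sigma prm' rf ∧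
      sigma prm rf = sigma prm' rf + 1 := by
  have hF1 : (univ.filter fun t : Fin NA => prm t = false ∧ t ≤ rf).card
      = (univ.filter fun t : Fin NA => prm' t = false ∧ t ≤ rf).card + 1 := by
    rw [hc.filter_sets_s5, Finset.card_insert_of_notMem]
    intro h
    simp only [mem_filter, mem_univ, true_and, hc.hru'] at h
    exact absurd h.1 (by simp)
  have hT1 : (univ.filter fun t : Fin NA => prm' t = true ∧ t ≤ rf).card
      = (univ.filter fun t : Fin NA => prm t = true ∧ t ≤ rf).card + 1 := by
    rw [hc.filter_sets_s6, Finset.card_insert_of_notMem]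
    intro h
    simp only [mem_filter, mem_univ, true_and, hc.hru] at h
    exact absurd h.1 (by simp)
  have hF2 : (univ.filter fun t : Fin NA => prm t = false ∧ t ≤ sf).card
      = (univ.filter fun t : Fin NA => prm t = false ∧ t ≤ rf).card := by
    rw [hc.filter_sets_s1]
  have hT2 : (univ.filter fun t : Fin NA => prm t = true ∧ t ≤ sf).card
      = (univ.filter fun t : Fin NA => prm t = true ∧ t ≤ rf).card + 1 := by
    rw [hc.filter_sets_s2, Finset.card_insert_of_notMem (hc.sf_not_mem_le_rf prm true)]
  have hF3 : (univ.filter fun t : Fin NA => prm' t = false ∧ t ≤ sf).card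
      = (univ.filter fun t : Fin NA => prm' t = false ∧ t ≤ rf).card + 1 := by
    rw [hc.filter_sets_s3, Finset.card_insert_of_notMem (hc.sf_not_mem_le_rf prm' false)]
  have hT3 : (univ.filter fun t : Fin NA => prm' t = true ∧ t ≤ sf).card
      = (univ.filter fun t : Fin NA => prm' t = true ∧ t ≤ rf).card := by
    rw [hc.filter_sets_s4]
  simp only [sigma, hc.hru, hc.hrp, hc.hru', hc.hrp']
  norm_num
  refine ⟨by omega, by omega, by omega⟩

theorem sigma_rf_rf (hc : SwapCtx prm prm' rf sf) : sigma prm rf = sigma prm' rf + 1 :=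
  (hc.sigma_vals).2.2

theorem sigma_prm_sf (hc : SwapCtx prm prm' rf sf) : sigma prm sf = sigma prm rf :=
  (hc.sigma_vals).1

theorem sigma_prm'_sf (hc : SwapCtx prm prm' rf sf) : sigma prm' sf = sigma prm' rf :=
  (hc.sigma_vals).2.1

theorem cnt_swap (hc : SwapCtx prm prm' rf sf) (b : Bool) {t : Fin NA}
    (ht : (sf : ℕ) ≤ (t : ℕ)) :
    (univ.filter fun x : Fin NA => prm' x = b ∧ x ≤ t).card
      = (univ.filter fun x : Fin NA => prm x = b ∧ x ≤ t).card := by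
  have hcons := hc.hcons
  apply Finset.card_bij' (fun a _ => Equiv.swap rf sf a) (fun a _ => Equiv.swap rf sf a)
  · intro a ha
    simp only [mem_filter, mem_univ, true_and] at ha ⊢
    refine ⟨by rw [hc.prm_swap a, ha.1], ?_⟩
    rcases eq_or_ne a rf with rfl | h2
    · rw [Equiv.swap_apply_left]; exact Fin.le_def.2 (by omega)
    rcases eq_or_ne a sf with rfl | h3
    · rw [Equiv.swap_apply_right]; exact Fin.le_def.2 (by omega)
    · rw [Equiv.swap_apply_of_ne_of_ne h2 h3]; exact ha.2
  · intro a ha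
    simp only [mem_filter, mem_univ, true_and] at ha ⊢
    refine ⟨by rw [hc.prm'_swap a, ha.1], ?_⟩
    rcases eq_or_ne a rf with rfl | h2
    · rw [Equiv.swap_apply_left]; exact Fin.le_def.2 (by omega)
    rcases eq_or_ne a sf with rfl | h3
    · rw [Equiv.swap_apply_right]; exact Fin.le_def.2 (by omega)
    · rw [Equiv.swap_apply_of_ne_of_ne h2 h3]; exact ha.2
  · intro a _; exact Equiv.swap_apply_self _ _ _
  · intro a _; exact Equiv.swap_apply_self _ _ _

theorem idx_out (hc : SwapCtx prm prm' rf sf) {t : Fin NA} (h1 : t ≠ rf) (h2 : t ≠ sf) :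
    idx prm t = idx prm' t := by
  have hcons := hc.hcons
  have hpt : prm' t = prm t := hc.hout t h1 h2
  rcases hc.lt_or_gt_of_out h1 h2 with hlt | hgt
  · simp only [idx, hpt]
    apply congrArg
    apply Finset.filter_congr
    intro x _
    simp only [Fin.le_def]
    constructor
    · rintro ⟨hx1, hx2⟩
      refine ⟨?_, hx2⟩
      rw [hc.hout x (fun h => by rw [h] at hx2; omega) (fun h => by rw [h] at hx2; omega)]
      exact hx1
    · rintro ⟨hx1, hx2⟩
      refine ⟨?_, hx2⟩
      rw [← hc.hout x (fun h => by rw [h] at hx2; omega) (fun h => by rw [h] at hx2; omega)]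
      exact hx1
  · simp only [idx, hpt]
    rw [hc.cnt_swap (prm t) (by omega)]

theorem sigma_out (hc : SwapCtx prm prm' rf sf) {t : Fin NA} (h1 : t ≠ rf) (h2 : t ≠ sf) :
    sigma prm t = sigma prm' t := by
  have hcons := hc.hcons
  have hpt : prm' t = prm t := hc.hout t h1 h2
  rcases hc.lt_or_gt_of_out h1 h2 with hlt | hgt
  · have hfilt : ∀ b : Bool, (univ.filter fun x : Fin NA => prm x = b ∧ x ≤ t)
        = (univ.filter fun x : Fin NA => prm' x = b ∧ x ≤ t) := by
      intro b
      apply Finset.filter_congr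
      intro x _
      simp only [Fin.le_def]
      constructor
      · rintro ⟨hx1, hx2⟩
        refine ⟨?_, hx2⟩
        rw [hc.hout x (fun h => by rw [h] at hx2; omega) (fun h => by rw [h] at hx2; omega)]
        exact hx1
      · rintro ⟨hx1, hx2⟩
        refine ⟨?_, hx2⟩
        rw [← hc.hout x (fun h => by rw [h] at hx2; omega) (fun h => by rw [h] at hx2; omega)]
        exact hx1
    simp only [sigma, hpt, hfilt false, hfilt true]
  · simp only [sigma, hpt, hc.cnt_swap false (by omega : (sf:ℕ) ≤ (t:ℕ)),
      hc.cnt_swap true (by omega : (sf:ℕ) ≤ (t:ℕ))]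

end SwapCtx

section WeightAux

variable {A : Type*} [CommRing A] {m n : ℕ}
variable {prm prm' : Fin NA → Bool} {rf sf : Fin NA}
variable (x : Fin m → A) (y : Fin n → A) (a : ℤ → A)

theorem SwapCtx.wFact_out (hc : SwapCtx prm prm' rf sf) {t : Fin NA}
    (h1 : t ≠ rf) (h2 : t ≠ sf) (c : ℤ) :
    wFact prm x y a t c = wFact prm' x y a t c := by
  have e0 : prm' t = prm t := hc.hout t h1 h2
  have e1 := hc.idx_out h1 h2
  have e2 := hc.sigma_out h1 h2
  simp only [wFact, e0, e1, e2]

theorem SwapCtx.wFact_rf (hc : SwapCtx prm prm' rf sf) (c : ℤ) :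
    wFact prm x y a rf c = wFact prm' x y a sf (c + 1) := by
  have e1 := hc.idx_rf
  have e2 : sigma prm rf = sigma prm' sf + 1 := by
    rw [hc.sigma_prm'_sf]; exact hc.sigma_rf_rf
  have e3 : sigma prm rf + c = sigma prm' sf + (c + 1) := by rw [e2]; ring
  simp only [wFact, hc.hru, hc.hrp', e1, e3, Bool.false_eq_true, if_false]

theorem SwapCtx.wFact_sf (hc : SwapCtx prm prm' rf sf) (c : ℤ) :
    wFact prm x y a sf c = wFact prm' x y a rf (c + 1) := by
  have e1 := hc.idx_sf
  have e2 : sigma prm sf = sigma prm' rf + 1 := by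
    rw [hc.sigma_prm_sf]; exact hc.sigma_rf_rf
  have e3 : sigma prm sf + c = sigma prm' rf + (c + 1) := by rw [e2]; ring
  simp only [wFact, hc.hrp, hc.hru', e1, e3, if_true]

theorem SwapCtx.wFact_pair (hc : SwapCtx prm prm' rf sf) (c c' : ℤ) :
    wFact prm x y a rf c + wFact prm x y a sf c
      = wFact prm' x y a rf c' + wFact prm' x y a sf c' := by
  simp only [wFact, hc.hru, hc.hrp, hc.hru', hc.hrp', hc.idx_rf, hc.idx_sf,
    hc.sigma_prm_sf, hc.sigma_prm'_sf, hc.sigma_rf_rf, Bool.false_eq_true, if_false, if_true]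
  ring

end WeightAux

section CellsAux

theorem mem_cells {lam mu : List ℕ} {i j : ℕ} :
    (i, j) ∈ cells lam mu ↔ i < lam.length ∧ mu.getD i 0 ≤ j ∧ j < lam.getD i 0 := by
  simp only [cells, Finset.mem_biUnion, Finset.mem_range, Finset.mem_image, Finset.mem_Ico]
  constructor
  · rintro ⟨i', hi', j', hj', he⟩
    have h1 : i' = i := congrArg Prod.fst he
    have h2 : j' = j := congrArg Prod.snd he
    subst h1; subst h2
    exact ⟨hi', hj'.1, hj'.2⟩
  · rintro ⟨h1, h2, h3⟩
    exact ⟨i, h1, j, ⟨h2, h3⟩, rfl⟩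

theorem getD_anti {l : List ℕ} (h : l.Pairwise (· ≥ ·)) {i i' : ℕ} (hii : i ≤ i') :
    l.getD i' 0 ≤ l.getD i 0 := by
  rcases lt_or_ge i' l.length with h' | h'
  · have hi : i < l.length := lt_of_le_of_lt hii h'
    rw [List.getD_eq_getElem l 0 h', List.getD_eq_getElem l 0 hi]
    rcases eq_or_lt_of_le hii with rfl | hlt
    · exact le_refl _
    · simpa using List.pairwise_iff_get.1 h ⟨i, hi⟩ ⟨i', h'⟩ hlt
  · rw [List.getD_eq_default l 0 h']
    exact Nat.zero_le _

theorem cells_rowConvex {lam mu : List ℕ} {i j1 j2 j : ℕ}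
    (h1 : (i, j1) ∈ cells lam mu) (h2 : (i, j2) ∈ cells lam mu)
    (hj1 : j1 ≤ j) (hj2 : j ≤ j2) : (i, j) ∈ cells lam mu := by
  rw [mem_cells] at h1 h2 ⊢
  exact ⟨h1.1, le_trans h1.2.1 hj1, lt_of_le_of_lt hj2 h2.2.2⟩

theorem cells_colConvex {lam mu : List ℕ} (hlam : lam.Pairwise (· ≥ ·))
    (hmu : mu.Pairwise (· ≥ ·)) {i1 i2 i j : ℕ}
    (h1 : (i1, j) ∈ cells lam mu) (h2 : (i2, j) ∈ cells lam mu)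
    (hi1 : i1 ≤ i) (hi2 : i ≤ i2) : (i, j) ∈ cells lam mu := by
  rw [mem_cells] at h1 h2 ⊢
  refine ⟨lt_of_le_of_lt hi2 h2.1, ?_, ?_⟩
  · exact le_trans (getD_anti hmu hi1) h1.2.1
  · exact lt_of_lt_of_le h2.2.2 (getD_anti hlam hi2)

theorem cells_swClosed {lam mu : List ℕ} (hmu : mu.Pairwise (· ≥ ·)) {i j : ℕ}
    (h1 : (i, j) ∈ cells lam mu) (h2 : (i + 1, j + 1) ∈ cells lam mu) :
    (i + 1, j) ∈ cells lam mu := by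
  rw [mem_cells] at h1 h2 ⊢
  refine ⟨h2.1, ?_, by omega⟩
  exact le_trans (getD_anti hmu (Nat.le_succ i)) h1.2.1

theorem cells_neClosed {lam mu : List ℕ} (hlam : lam.Pairwise (· ≥ ·)) {i j : ℕ}
    (h1 : (i, j) ∈ cells lam mu) (h2 : (i + 1, j + 1) ∈ cells lam mu) :
    (i, j + 1) ∈ cells lam mu := by
  rw [mem_cells] at h1 h2 ⊢
  refine ⟨h1.1, by omega, ?_⟩
  exact lt_of_lt_of_le h2.2.2 (getD_anti hlam (Nat.le_succ i))

end CellsAux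

section FiberAux

open Finset

variable {C : Finset (ℕ × ℕ)}

/-- Key of a filling: `none` exactly on the boxes holding `rf` or `sf`. -/
noncomputable def okey (rf sf : Fin NA) (T : {p // p ∈ C} → Fin NA) :
    {p // p ∈ C} → Option (Fin NA) := fun u =>
  if T u = rf ∨ T u = sf then none else some (T u)

/-- The box to the right is also in the `{rf, sf}`-region. -/
def rtIn (κ : {p // p ∈ C} → Option (Fin NA)) (u : {p // p ∈ C}) : Prop :=
  ∃ h : (u.1.1, u.1.2 + 1) ∈ C, κ ⟨(u.1.1, u.1.2 + 1), h⟩ = none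

/-- The box above is also in the `{rf, sf}`-region. -/
def abIn (κ : {p // p ∈ C} → Option (Fin NA)) (u : {p // p ∈ C}) : Prop :=
  u.1.1 ≠ 0 ∧ ∃ h : (u.1.1 - 1, u.1.2) ∈ C, κ ⟨(u.1.1 - 1, u.1.2), h⟩ = none

/-- The box to the left is also in the `{rf, sf}`-region. -/
def ltIn (κ : {p // p ∈ C} → Option (Fin NA)) (u : {p // p ∈ C}) : Prop :=
  u.1.2 ≠ 0 ∧ ∃ h : (u.1.1, u.1.2 - 1) ∈ C, κ ⟨(u.1.1, u.1.2 - 1), h⟩ = none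

/-- The box below is also in the `{rf, sf}`-region. -/
def bwIn (κ : {p // p ∈ C} → Option (Fin NA)) (u : {p // p ∈ C}) : Prop :=
  ∃ h : (u.1.1 + 1, u.1.2) ∈ C, κ ⟨(u.1.1 + 1, u.1.2), h⟩ = none

open Classical in
/-- Forced value at each box for the `prm`-side. -/
noncomputable def frcP (rf sf : Fin NA) (κ : {p // p ∈ C} → Option (Fin NA)) :
    {p // p ∈ C} → Option (Fin NA) := fun u =>
  (κ u).elim (if rtIn κ u then some rf else if abIn κ u then some sf else none) some

open Classical in
/-- Forced value at each box for the `prm'`-side. -/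
noncomputable def frcP' (rf sf : Fin NA) (κ : {p // p ∈ C} → Option (Fin NA)) :
    {p // p ∈ C} → Option (Fin NA) := fun u =>
  (κ u).elim (if ltIn κ u then some sf else if bwIn κ u then some rf else none) some

/-- Allowed values at each box for the `prm`-side. -/
noncomputable def alw (rf sf : Fin NA) (κ : {p // p ∈ C} → Option (Fin NA))
    (u : {p // p ∈ C}) : Finset (Fin NA) :=
  (frcP rf sf κ u).elim {rf, sf} (fun t => {t})

/-- Allowed values at each box for the `prm'`-side. -/
noncomputable def alw' (rf sf : Fin NA) (κ : {p // p ∈ C} → Option (Fin NA))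
    (u : {p // p ∈ C}) : Finset (Fin NA) :=
  (frcP' rf sf κ u).elim {rf, sf} (fun t => {t})

/-- Structural properties of a key that hold whenever its fiber is nonempty. -/
structure GoodKey (prm : Fin NA → Bool) (rf sf : Fin NA) (C : Finset (ℕ × ℕ))
    (κ : {p // p ∈ C} → Option (Fin NA)) : Prop where
  g0 : ∀ u t, κ u = some t → t ≠ rf ∧ t ≠ sf
  g1 : ∀ u v : {p // p ∈ C}, u.1.1 = v.1.1 → u.1.2 ≤ v.1.2 →
        (κ u).getD rf ≤ (κ v).getD rf
  g2 : ∀ u v : {p // p ∈ C}, u.1.2 = v.1.2 → u.1.1 ≤ v.1.1 →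
        (κ u).getD rf ≤ (κ v).getD rf
  g3 : ∀ u v : {p // p ∈ C}, u.1.2 = v.1.2 → u.1.1 ≠ v.1.1 → ∀ t t',
        κ u = some t → κ v = some t' → prm t = false → t ≠ t'
  g4 : ∀ u v : {p // p ∈ C}, u.1.1 = v.1.1 → u.1.2 ≠ v.1.2 → ∀ t t',
        κ u = some t → κ v = some t' → prm t = true → t ≠ t'
  g5 : ∀ u v w : {p // p ∈ C}, w.1.1 + 1 = u.1.1 → w.1.2 = u.1.2 →
        v.1.1 = u.1.1 → u.1.2 + 1 = v.1.2 →
        κ u = none → κ v = none → κ w = none → False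
  g6 : ∀ u v w : {p // p ∈ C}, w.1.1 = u.1.1 → w.1.2 + 1 = u.1.2 →
        u.1.1 + 1 = v.1.1 → u.1.2 = v.1.2 →
        κ u = none → κ v = none → κ w = none → False

variable {prm prm' : Fin NA → Bool} {rf sf : Fin NA}

theorem SwapCtx.between (hc : SwapCtx prm prm' rf sf) {t : Fin NA}
    (h1 : (rf : ℕ) ≤ (t : ℕ)) (h2 : (t : ℕ) ≤ (sf : ℕ)) : t = rf ∨ t = sf := by
  have := hc.hcons
  rcases eq_or_ne (t : ℕ) (rf : ℕ) with h | h
  · exact Or.inl (Fin.ext h)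
  · exact Or.inr (Fin.ext (by omega))

theorem okey_eq_none_iff {rf sf : Fin NA} {T : {p // p ∈ C} → Fin NA} {u : {p // p ∈ C}} :
    okey rf sf T u = none ↔ (T u = rf ∨ T u = sf) := by
  unfold okey
  split <;> simp_all

theorem okey_eq_some {rf sf : Fin NA} {T : {p // p ∈ C} → Fin NA} {u : {p // p ∈ C}}
    {t : Fin NA} (h : okey rf sf T u = some t) : T u = t ∧ t ≠ rf ∧ t ≠ sf := by
  unfold okey at h
  split at h
  · exact absurd h (by simp)
  · next hn =>
    push_neg at hn
    obtain rfl : T u = t := Option.some_injective _ h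
    exact ⟨rfl, hn.1, hn.2⟩

theorem okey_some_of_not {rf sf : Fin NA} {T : {p // p ∈ C} → Fin NA} {u : {p // p ∈ C}}
    (h : ¬(T u = rf ∨ T u = sf)) : okey rf sf T u = some (T u) := by
  unfold okey
  rw [if_neg h]

theorem good_of_prm (hc : SwapCtx prm prm' rf sf)
    (hSW : ∀ i j, (i, j) ∈ C → (i + 1, j + 1) ∈ C → (i + 1, j) ∈ C)
    {T : {p // p ∈ C} → Fin NA} (hT : IsSuperTab C prm T) :
    GoodKey prm rf sf C (okey rf sf T) := by
  obtain ⟨h1, h2, h3, h4⟩ := hT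
  have hcons := hc.hcons
  have hrowRF : ∀ u v : {p // p ∈ C}, u.1.1 = v.1.1 → u.1.2 < v.1.2 →
      (T u = rf ∨ T u = sf) → (T v = rf ∨ T v = sf) → T u = rf := by
    intro u v e hj hu hv
    rcases hu with h | h
    · exact h
    · exfalso
      have hle := Fin.le_def.1 (h1 u v e (le_of_lt hj))
      have hv' : T v = sf := by
        rcases hv with h' | h'
        · rw [h, h'] at hle; omega
        · exact h'
      exact h4 u v e (by omega) (by rw [h]; exact hc.hrp) (by rw [h, hv'])
  have hcolSF : ∀ u v : {p // p ∈ C}, u.1.2 = v.1.2 → u.1.1 < v.1.1 →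
      (T u = rf ∨ T u = sf) → (T v = rf ∨ T v = sf) → T v = sf := by
    intro u v e hi hu hv
    rcases hv with h | h
    · exfalso
      have hle := Fin.le_def.1 (h2 u v e (le_of_lt hi))
      have hu' : T u = rf := by
        rcases hu with h' | h'
        · exact h'
        · rw [h', h] at hle; omega
      exact h3 u v e (by omega) (by rw [hu']; exact hc.hru) (by rw [hu', h])
    · exact h
  have hg1 : ∀ (h0 : ∀ u v : {p // p ∈ C}, u.1.1 = v.1.1 → u.1.2 ≤ v.1.2 → T u ≤ T v)
      (u v : {p // p ∈ C}), u.1.1 = v.1.1 → u.1.2 ≤ v.1.2 →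
      (okey rf sf T u).getD rf ≤ (okey rf sf T v).getD rf := by
    intro h0 u v he hj
    have hle := Fin.le_def.1 (h0 u v he hj)
    by_cases pu : T u = rf ∨ T u = sf <;> by_cases pv : T v = rf ∨ T v = sf
    · rw [okey_eq_none_iff.2 pu, okey_eq_none_iff.2 pv]
    · rw [okey_eq_none_iff.2 pu, okey_some_of_not pv]
      simp only [Option.getD_none, Option.getD_some]
      push_neg at pv
      have e1 : (T v : ℕ) ≠ (rf : ℕ) := fun h => pv.1 (Fin.ext h)
      have e2 : (T v : ℕ) ≠ (sf : ℕ) := fun h => pv.2 (Fin.ext h)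
      have e3 : (T u : ℕ) = (rf : ℕ) ∨ (T u : ℕ) = (sf : ℕ) := by
        rcases pu with h | h
        · exact Or.inl (by rw [h])
        · exact Or.inr (by rw [h])
      exact Fin.le_def.2 (by omega)
    · rw [okey_some_of_not pu, okey_eq_none_iff.2 pv]
      simp only [Option.getD_none, Option.getD_some]
      push_neg at pu
      have e1 : (T u : ℕ) ≠ (rf : ℕ) := fun h => pu.1 (Fin.ext h)
      have e2 : (T u : ℕ) ≠ (sf : ℕ) := fun h => pu.2 (Fin.ext h)
      have e3 : (T v : ℕ) = (rf : ℕ) ∨ (T v : ℕ) = (sf : ℕ) := by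
        rcases pv with h | h
        · exact Or.inl (by rw [h])
        · exact Or.inr (by rw [h])
      exact Fin.le_def.2 (by omega)
    · rw [okey_some_of_not pu, okey_some_of_not pv]
      simp only [Option.getD_some]
      exact Fin.le_def.2 hle
  refine ⟨?_, ?_, ?_, ?_, ?_, ?_, ?_⟩
  · intro u t h; exact (okey_eq_some h).2
  · exact hg1 h1
  · intro u v he hj
    have hle := Fin.le_def.1 (h2 u v he hj)
    by_cases pu : T u = rf ∨ T u = sf <;> by_cases pv : T v = rf ∨ T v = sf
    · rw [okey_eq_none_iff.2 pu, okey_eq_none_iff.2 pv]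
    · rw [okey_eq_none_iff.2 pu, okey_some_of_not pv]
      simp only [Option.getD_none, Option.getD_some]
      push_neg at pv
      have e1 : (T v : ℕ) ≠ (rf : ℕ) := fun h => pv.1 (Fin.ext h)
      have e2 : (T v : ℕ) ≠ (sf : ℕ) := fun h => pv.2 (Fin.ext h)
      have e3 : (T u : ℕ) = (rf : ℕ) ∨ (T u : ℕ) = (sf : ℕ) := by
        rcases pu with h | h
        · exact Or.inl (by rw [h])
        · exact Or.inr (by rw [h])
      exact Fin.le_def.2 (by omega)
    · rw [okey_some_of_not pu, okey_eq_none_iff.2 pv]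
      simp only [Option.getD_none, Option.getD_some]
      push_neg at pu
      have e1 : (T u : ℕ) ≠ (rf : ℕ) := fun h => pu.1 (Fin.ext h)
      have e2 : (T u : ℕ) ≠ (sf : ℕ) := fun h => pu.2 (Fin.ext h)
      have e3 : (T v : ℕ) = (rf : ℕ) ∨ (T v : ℕ) = (sf : ℕ) := by
        rcases pv with h | h
        · exact Or.inl (by rw [h])
        · exact Or.inr (by rw [h])
      exact Fin.le_def.2 (by omega)
    · rw [okey_some_of_not pu, okey_some_of_not pv]
      simp only [Option.getD_some]
      exact Fin.le_def.2 hle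
  · intro u v he hne t t' ht ht' hp
    have hu := (okey_eq_some ht).1
    have hv := (okey_eq_some ht').1
    intro hEq
    exact h3 u v he hne (by rw [hu]; exact hp) (by rw [hu, hv, hEq])
  · intro u v he hne t t' ht ht' hp
    have hu := (okey_eq_some ht).1
    have hv := (okey_eq_some ht').1
    intro hEq
    exact h4 u v he hne (by rw [hu]; exact hp) (by rw [hu, hv, hEq])
  · intro u v w ew1 ew2 ev1 ev2 hu hv hw
    have pu := okey_eq_none_iff.1 hu
    have pv := okey_eq_none_iff.1 hv
    have pw := okey_eq_none_iff.1 hw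
    have hTu : T u = rf := hrowRF u v ev1.symm (by omega) pu pv
    have hTu' : T u = sf := hcolSF w u ew2 (by omega) pw pu
    rw [hTu] at hTu'
    exact hc.rf_ne_sf hTu'
  · intro u v w ew1 ew2 ev1 ev2 hu hv hw
    have pu := okey_eq_none_iff.1 hu
    have pv := okey_eq_none_iff.1 hv
    have pw := okey_eq_none_iff.1 hw
    have hv1 : v.1 = (w.1.1 + 1, w.1.2 + 1) := Prod.ext (by omega) (by omega)
    have hzC : (w.1.1 + 1, w.1.2) ∈ C := hSW w.1.1 w.1.2 w.2 (hv1 ▸ v.2)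
    set z : {p // p ∈ C} := ⟨(w.1.1 + 1, w.1.2), hzC⟩ with hz
    have hzw2 : w.1.2 = z.1.2 := rfl
    have hzw1 : w.1.1 < z.1.1 := by show w.1.1 < w.1.1 + 1; omega
    have hlo := Fin.le_def.1 (h2 w z hzw2 (le_of_lt hzw1))
    have hhi := Fin.le_def.1 (h1 z v (by show w.1.1 + 1 = (v.1 : ℕ × ℕ).1; omega)
      (by show w.1.2 ≤ (v.1 : ℕ × ℕ).2; omega))
    have pz : T z = rf ∨ T z = sf := by
      apply hc.between
      · rcases pw with h | h
        · rw [h] at hlo; omega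
        · rw [h] at hlo; omega
      · rcases pv with h | h
        · rw [h] at hhi; omega
        · rw [h] at hhi; omega
    have hTz1 : T z = rf := hrowRF z v (by show w.1.1 + 1 = (v.1 : ℕ × ℕ).1; omega)
      (by show w.1.2 < (v.1 : ℕ × ℕ).2; omega) pz pv
    have hTz2 : T z = sf := hcolSF w z hzw2 hzw1 pw pz
    rw [hTz1] at hTz2
    exact hc.rf_ne_sf hTz2

theorem good_of_prm' (hc : SwapCtx prm prm' rf sf)
    (hNE : ∀ i j, (i, j) ∈ C → (i + 1, j + 1) ∈ C → (i, j + 1) ∈ C)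
    {T : {p // p ∈ C} → Fin NA} (hT : IsSuperTab C prm' T) :
    GoodKey prm rf sf C (okey rf sf T) := by
  obtain ⟨h1, h2, h3, h4⟩ := hT
  have hcons := hc.hcons
  have hrowSF : ∀ u v : {p // p ∈ C}, u.1.1 = v.1.1 → u.1.2 < v.1.2 →
      (T u = rf ∨ T u = sf) → (T v = rf ∨ T v = sf) → T v = sf := by
    intro u v e hj hu hv
    rcases hv with h | h
    · exfalso
      have hle := Fin.le_def.1 (h1 u v e (le_of_lt hj))
      have hu' : T u = rf := by
        rcases hu with h' | h'
        · exact h'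
        · rw [h', h] at hle; omega
      exact h4 u v e (by omega) (by rw [hu']; exact hc.hru') (by rw [hu', h])
    · exact h
  have hcolRF : ∀ u v : {p // p ∈ C}, u.1.2 = v.1.2 → u.1.1 < v.1.1 →
      (T u = rf ∨ T u = sf) → (T v = rf ∨ T v = sf) → T u = rf := by
    intro u v e hi hu hv
    rcases hu with h | h
    · exact h
    · exfalso
      have hle := Fin.le_def.1 (h2 u v e (le_of_lt hi))
      have hv' : T v = sf := by
        rcases hv with h' | h'
        · rw [h, h'] at hle; omega
        · exact h'
      exact h3 u v e (by omega) (by rw [h]; exact hc.hrp') (by rw [h, hv'])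
  refine ⟨?_, ?_, ?_, ?_, ?_, ?_, ?_⟩
  · intro u t h; exact (okey_eq_some h).2
  · intro u v he hj
    have hle := Fin.le_def.1 (h1 u v he hj)
    by_cases pu : T u = rf ∨ T u = sf <;> by_cases pv : T v = rf ∨ T v = sf
    · rw [okey_eq_none_iff.2 pu, okey_eq_none_iff.2 pv]
    · rw [okey_eq_none_iff.2 pu, okey_some_of_not pv]
      simp only [Option.getD_none, Option.getD_some]
      push_neg at pv
      have e1 : (T v : ℕ) ≠ (rf : ℕ) := fun h => pv.1 (Fin.ext h)
      have e2 : (T v : ℕ) ≠ (sf : ℕ) := fun h => pv.2 (Fin.ext h)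
      have e3 : (T u : ℕ) = (rf : ℕ) ∨ (T u : ℕ) = (sf : ℕ) := by
        rcases pu with h | h
        · exact Or.inl (by rw [h])
        · exact Or.inr (by rw [h])
      exact Fin.le_def.2 (by omega)
    · rw [okey_some_of_not pu, okey_eq_none_iff.2 pv]
      simp only [Option.getD_none, Option.getD_some]
      push_neg at pu
      have e1 : (T u : ℕ) ≠ (rf : ℕ) := fun h => pu.1 (Fin.ext h)
      have e2 : (T u : ℕ) ≠ (sf : ℕ) := fun h => pu.2 (Fin.ext h)
      have e3 : (T v : ℕ) = (rf : ℕ) ∨ (T v : ℕ) = (sf : ℕ) := by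
        rcases pv with h | h
        · exact Or.inl (by rw [h])
        · exact Or.inr (by rw [h])
      exact Fin.le_def.2 (by omega)
    · rw [okey_some_of_not pu, okey_some_of_not pv]
      simp only [Option.getD_some]
      exact Fin.le_def.2 hle
  · intro u v he hj
    have hle := Fin.le_def.1 (h2 u v he hj)
    by_cases pu : T u = rf ∨ T u = sf <;> by_cases pv : T v = rf ∨ T v = sf
    · rw [okey_eq_none_iff.2 pu, okey_eq_none_iff.2 pv]
    · rw [okey_eq_none_iff.2 pu, okey_some_of_not pv]
      simp only [Option.getD_none, Option.getD_some]
      push_neg at pv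
      have e1 : (T v : ℕ) ≠ (rf : ℕ) := fun h => pv.1 (Fin.ext h)
      have e2 : (T v : ℕ) ≠ (sf : ℕ) := fun h => pv.2 (Fin.ext h)
      have e3 : (T u : ℕ) = (rf : ℕ) ∨ (T u : ℕ) = (sf : ℕ) := by
        rcases pu with h | h
        · exact Or.inl (by rw [h])
        · exact Or.inr (by rw [h])
      exact Fin.le_def.2 (by omega)
    · rw [okey_some_of_not pu, okey_eq_none_iff.2 pv]
      simp only [Option.getD_none, Option.getD_some]
      push_neg at pu
      have e1 : (T u : ℕ) ≠ (rf : ℕ) := fun h => pu.1 (Fin.ext h)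
      have e2 : (T u : ℕ) ≠ (sf : ℕ) := fun h => pu.2 (Fin.ext h)
      have e3 : (T v : ℕ) = (rf : ℕ) ∨ (T v : ℕ) = (sf : ℕ) := by
        rcases pv with h | h
        · exact Or.inl (by rw [h])
        · exact Or.inr (by rw [h])
      exact Fin.le_def.2 (by omega)
    · rw [okey_some_of_not pu, okey_some_of_not pv]
      simp only [Option.getD_some]
      exact Fin.le_def.2 hle
  · intro u v he hne t t' ht ht' hp
    have hu := okey_eq_some ht
    have hv := okey_eq_some ht'
    intro hEq
    refine h3 u v he hne ?_ (by rw [hu.1, hv.1, hEq])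
    rw [hu.1, hc.hout t hu.2.1 hu.2.2]
    exact hp
  · intro u v he hne t t' ht ht' hp
    have hu := okey_eq_some ht
    have hv := okey_eq_some ht'
    intro hEq
    refine h4 u v he hne ?_ (by rw [hu.1, hv.1, hEq])
    rw [hu.1, hc.hout t hu.2.1 hu.2.2]
    exact hp
  · intro u v w ew1 ew2 ev1 ev2 hu hv hw
    have pu := okey_eq_none_iff.1 hu
    have pv := okey_eq_none_iff.1 hv
    have pw := okey_eq_none_iff.1 hw
    have hv1 : v.1 = (w.1.1 + 1, w.1.2 + 1) := Prod.ext (by omega) (by omega)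
    have hzC : (w.1.1, w.1.2 + 1) ∈ C := hNE w.1.1 w.1.2 w.2 (hv1 ▸ v.2)
    set z : {p // p ∈ C} := ⟨(w.1.1, w.1.2 + 1), hzC⟩ with hz
    have hlo := Fin.le_def.1 (h1 w z rfl (by show w.1.2 ≤ w.1.2 + 1; omega))
    have hhi := Fin.le_def.1 (h2 z v (by show w.1.2 + 1 = (v.1 : ℕ × ℕ).2; omega)
      (by show w.1.1 ≤ (v.1 : ℕ × ℕ).1; omega))
    have pz : T z = rf ∨ T z = sf := by
      apply hc.between
      · rcases pw with h | h
        · rw [h] at hlo; omega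
        · rw [h] at hlo; omega
      · rcases pv with h | h
        · rw [h] at hhi; omega
        · rw [h] at hhi; omega
    have hTz1 : T z = sf := hrowSF w z rfl (by show w.1.2 < w.1.2 + 1; omega) pw pz
    have hTz2 : T z = rf := hcolRF z v (by show w.1.2 + 1 = (v.1 : ℕ × ℕ).2; omega)
      (by show w.1.1 < (v.1 : ℕ × ℕ).1; omega) pz pv
    rw [hTz2] at hTz1
    exact hc.rf_ne_sf hTz1
  · intro u v w ew1 ew2 ev1 ev2 hu hv hw
    have pu := okey_eq_none_iff.1 hu
    have pv := okey_eq_none_iff.1 hv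
    have pw := okey_eq_none_iff.1 hw
    have hTu : T u = sf := hrowSF w u ew1 (by omega) pw pu
    have hTu' : T u = rf := hcolRF u v ev2 (by omega) pu pv
    rw [hTu'] at hTu
    exact hc.rf_ne_sf hTu

section FrcLemmas

variable {κ : {p // p ∈ C} → Option (Fin NA)}

theorem frcP_some {t : Fin NA} {u : {p // p ∈ C}} (rf sf : Fin NA) (h : κ u = some t) :
    frcP rf sf κ u = some t := by simp [frcP, h]

theorem frcP_rt {u : {p // p ∈ C}} (rf sf : Fin NA) (h : κ u = none) (hrt : rtIn κ u) :
    frcP rf sf κ u = some rf := by simp [frcP, h, hrt]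

theorem frcP_ab {u : {p // p ∈ C}} (rf sf : Fin NA) (h : κ u = none) (hrt : ¬rtIn κ u)
    (hab : abIn κ u) : frcP rf sf κ u = some sf := by simp [frcP, h, hrt, hab]

theorem frcP_free {u : {p // p ∈ C}} (rf sf : Fin NA) (h : κ u = none) (hrt : ¬rtIn κ u)
    (hab : ¬abIn κ u) : frcP rf sf κ u = none := by simp [frcP, h, hrt, hab]

theorem frcP'_some {t : Fin NA} {u : {p // p ∈ C}} (rf sf : Fin NA) (h : κ u = some t) :
    frcP' rf sf κ u = some t := by simp [frcP', h]

theorem frcP'_lt {u : {p // p ∈ C}} (rf sf : Fin NA) (h : κ u = none) (hlt : ltIn κ u) :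
    frcP' rf sf κ u = some sf := by simp [frcP', h, hlt]

theorem frcP'_bw {u : {p // p ∈ C}} (rf sf : Fin NA) (h : κ u = none) (hlt : ¬ltIn κ u)
    (hbw : bwIn κ u) : frcP' rf sf κ u = some rf := by simp [frcP', h, hlt, hbw]

theorem frcP'_free {u : {p // p ∈ C}} (rf sf : Fin NA) (h : κ u = none) (hlt : ¬ltIn κ u)
    (hbw : ¬bwIn κ u) : frcP' rf sf κ u = none := by simp [frcP', h, hlt, hbw]

theorem alw_of_some {rf sf t : Fin NA} {u : {p // p ∈ C}} (h : frcP rf sf κ u = some t) :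
    alw rf sf κ u = {t} := by rw [alw, h]; rfl

theorem alw_of_none {rf sf : Fin NA} {u : {p // p ∈ C}} (h : frcP rf sf κ u = none) :
    alw rf sf κ u = {rf, sf} := by rw [alw, h]; rfl

theorem alw'_of_some {rf sf t : Fin NA} {u : {p // p ∈ C}} (h : frcP' rf sf κ u = some t) :
    alw' rf sf κ u = {t} := by rw [alw', h]; rfl

theorem alw'_of_none {rf sf : Fin NA} {u : {p // p ∈ C}} (h : frcP' rf sf κ u = none) :
    alw' rf sf κ u = {rf, sf} := by rw [alw', h]; rfl

end FrcLemmas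

theorem supertab_iff_prm (hc : SwapCtx prm prm' rf sf)
    (hRow : ∀ i j1 j2 j, (i, j1) ∈ C → (i, j2) ∈ C → j1 ≤ j → j ≤ j2 → (i, j) ∈ C)
    (hCol : ∀ i1 i2 i j, (i1, j) ∈ C → (i2, j) ∈ C → i1 ≤ i → i ≤ i2 → (i, j) ∈ C)
    {κ : {p // p ∈ C} → Option (Fin NA)} (hg : GoodKey prm rf sf C κ)
    (T : {p // p ∈ C} → Fin NA) :
    (IsSuperTab C prm T ∧ okey rf sf T = κ) ↔ ∀ u, T u ∈ alw rf sf κ u := by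
  have hcons := hc.hcons
  constructor
  · rintro ⟨hT, rfl⟩
    obtain ⟨h1, h2, h3, h4⟩ := hT
    have hrowRF : ∀ u v : {p // p ∈ C}, u.1.1 = v.1.1 → u.1.2 < v.1.2 →
        (T u = rf ∨ T u = sf) → (T v = rf ∨ T v = sf) → T u = rf := by
      intro u v e hj hu hv
      rcases hu with h | h
      · exact h
      · exfalso
        have hle := Fin.le_def.1 (h1 u v e (le_of_lt hj))
        have hv' : T v = sf := by
          rcases hv with h' | h'
          · rw [h, h'] at hle; omega
          · exact h'
        exact h4 u v e (by omega) (by rw [h]; exact hc.hrp) (by rw [h, hv'])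
    have hcolSF : ∀ u v : {p // p ∈ C}, u.1.2 = v.1.2 → u.1.1 < v.1.1 →
        (T u = rf ∨ T u = sf) → (T v = rf ∨ T v = sf) → T v = sf := by
      intro u v e hi hu hv
      rcases hv with h | h
      · exfalso
        have hle := Fin.le_def.1 (h2 u v e (le_of_lt hi))
        have hu' : T u = rf := by
          rcases hu with h' | h'
          · exact h'
          · rw [h', h] at hle; omega
        exact h3 u v e (by omega) (by rw [hu']; exact hc.hru) (by rw [hu', h])
      · exact h
    intro u
    cases e : okey rf sf T u with
    | some t =>
      rw [alw_of_some (frcP_some rf sf e), Finset.mem_singleton]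
      exact (okey_eq_some e).1
    | none =>
      have pu := okey_eq_none_iff.1 e
      by_cases hrt : rtIn (okey rf sf T) u
      · rw [alw_of_some (frcP_rt rf sf e hrt), Finset.mem_singleton]
        obtain ⟨hmem, hnone⟩ := hrt
        exact hrowRF u ⟨(u.1.1, u.1.2 + 1), hmem⟩ rfl (by show u.1.2 < u.1.2 + 1; omega) pu
          (okey_eq_none_iff.1 hnone)
      by_cases hab : abIn (okey rf sf T) u
      · rw [alw_of_some (frcP_ab rf sf e hrt hab), Finset.mem_singleton]
        obtain ⟨hne0, hmem, hnone⟩ := hab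
        exact hcolSF ⟨(u.1.1 - 1, u.1.2), hmem⟩ u rfl (by show u.1.1 - 1 < u.1.1; omega)
          (okey_eq_none_iff.1 hnone) pu
      · rw [alw_of_none (frcP_free rf sf e hrt hab)]
        rcases pu with h | h
        · exact Finset.mem_insert.2 (Or.inl h)
        · exact Finset.mem_insert.2 (Or.inr (Finset.mem_singleton.2 h))
  · intro hall
    have fsome : ∀ (u : {p // p ∈ C}) t, κ u = some t → T u = t := by
      intro u t h
      have hu := hall u
      rw [alw_of_some (frcP_some rf sf h), Finset.mem_singleton] at hu
      exact hu
    have fnone : ∀ u : {p // p ∈ C}, κ u = none → T u = rf ∨ T u = sf := by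
      intro u h
      have hu := hall u
      by_cases hrt : rtIn κ u
      · rw [alw_of_some (frcP_rt rf sf h hrt), Finset.mem_singleton] at hu
        exact Or.inl hu
      by_cases hab : abIn κ u
      · rw [alw_of_some (frcP_ab rf sf h hrt hab), Finset.mem_singleton] at hu
        exact Or.inr hu
      · rw [alw_of_none (frcP_free rf sf h hrt hab), Finset.mem_insert,
          Finset.mem_singleton] at hu
        exact hu
    have frt : ∀ u : {p // p ∈ C}, κ u = none → rtIn κ u → T u = rf := by
      intro u h hrt
      have hu := hall u
      rw [alw_of_some (frcP_rt rf sf h hrt), Finset.mem_singleton] at hu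
      exact hu
    have fab : ∀ u : {p // p ∈ C}, κ u = none → abIn κ u → T u = sf := by
      intro u h hab
      have hrt : ¬rtIn κ u := by
        intro hrt
        obtain ⟨hmemv, hnv⟩ := hrt
        obtain ⟨hne0, hmemw, hnw⟩ := hab
        exact hg.g5 u ⟨(u.1.1, u.1.2 + 1), hmemv⟩ ⟨(u.1.1 - 1, u.1.2), hmemw⟩
          (by show u.1.1 - 1 + 1 = u.1.1; omega) rfl rfl rfl h hnv hnw
      have hu := hall u
      rw [alw_of_some (frcP_ab rf sf h hrt hab), Finset.mem_singleton] at hu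
      exact hu
    have hkey : okey rf sf T = κ := by
      funext u
      cases e : κ u with
      | none => rw [okey_eq_none_iff.2 (fnone u e)]
      | some t =>
        have h0 := hg.g0 u t e
        have h1 := fsome u t e
        rw [okey_some_of_not (by rw [h1]; push_neg; exact h0), h1]
    have mono1 : ∀ u v : {p // p ∈ C}, u.1.1 = v.1.1 → u.1.2 ≤ v.1.2 → T u ≤ T v := by
      intro u v he hj
      rcases eq_or_lt_of_le hj with hje | hjl
      · rw [show u = v from Subtype.ext (Prod.ext he hje)]
      by_cases eu : κ u = none <;> by_cases ev : κ v = none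
      · have hv1 : v.1 = (u.1.1, v.1.2) := Prod.ext he.symm rfl
        have hmemw : (u.1.1, u.1.2 + 1) ∈ C :=
          hRow u.1.1 u.1.2 v.1.2 (u.1.2 + 1) u.2 (hv1 ▸ v.2) (by omega) (by omega)
        set w : {p // p ∈ C} := ⟨(u.1.1, u.1.2 + 1), hmemw⟩ with hw
        have hlo := hg.g1 u w rfl (by show u.1.2 ≤ u.1.2 + 1; omega)
        have hhi := hg.g1 w v (by show u.1.1 = v.1.1; omega) (by show u.1.2 + 1 ≤ v.1.2; omega)
        rw [eu] at hlo; rw [ev] at hhi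
        simp only [Option.getD_none] at hlo hhi
        have ew : κ w = none := by
          cases ew' : κ w with
          | none => rfl
          | some t =>
            exfalso
            rw [ew'] at hlo hhi
            simp only [Option.getD_some] at hlo hhi
            exact (hg.g0 w t ew').1 (le_antisymm hhi hlo)
        have hTu : T u = rf := frt u eu ⟨hmemw, ew⟩
        have hTv := fnone v ev
        refine Fin.le_def.2 ?_
        rw [hTu]
        rcases hTv with h | h <;> rw [h] <;> omega
      · have hTu := fnone u eu
        obtain ⟨t, ht⟩ := Option.ne_none_iff_exists'.1 ev
        have hTv := fsome v t ht
        have hle := hg.g1 u v he hj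
        rw [eu, ht] at hle
        simp only [Option.getD_none, Option.getD_some] at hle
        have h0 := hg.g0 v t ht
        have e1 : (t : ℕ) ≠ (rf : ℕ) := fun h => h0.1 (Fin.ext h)
        have e2 : (t : ℕ) ≠ (sf : ℕ) := fun h => h0.2 (Fin.ext h)
        have hle' := Fin.le_def.1 hle
        refine Fin.le_def.2 ?_
        rw [hTv]
        rcases hTu with h | h <;> rw [h] <;> omega
      · obtain ⟨t, ht⟩ := Option.ne_none_iff_exists'.1 eu
        have hTu := fsome u t ht
        have hTv := fnone v ev
        have hle := hg.g1 u v he hj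
        rw [ev, ht] at hle
        simp only [Option.getD_none, Option.getD_some] at hle
        have h0 := hg.g0 u t ht
        have e1 : (t : ℕ) ≠ (rf : ℕ) := fun h => h0.1 (Fin.ext h)
        have hle' := Fin.le_def.1 hle
        refine Fin.le_def.2 ?_
        rw [hTu]
        rcases hTv with h | h <;> rw [h] <;> omega
      · obtain ⟨t, ht⟩ := Option.ne_none_iff_exists'.1 eu
        obtain ⟨t', ht'⟩ := Option.ne_none_iff_exists'.1 ev
        have hle := hg.g1 u v he hj
        rw [ht, ht'] at hle
        simp only [Option.getD_some] at hle
        rw [fsome u t ht, fsome v t' ht']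
        exact hle
    have mono2 : ∀ u v : {p // p ∈ C}, u.1.2 = v.1.2 → u.1.1 ≤ v.1.1 → T u ≤ T v := by
      intro u v he hj
      rcases eq_or_lt_of_le hj with hje | hjl
      · rw [show u = v from Subtype.ext (Prod.ext hje he)]
      by_cases eu : κ u = none <;> by_cases ev : κ v = none
      · have hu1 : u.1 = (u.1.1, v.1.2) := Prod.ext rfl he
        have hmemw : (v.1.1 - 1, v.1.2) ∈ C :=
          hCol u.1.1 v.1.1 (v.1.1 - 1) v.1.2 (hu1 ▸ u.2) v.2 (by omega) (by omega)
        set w : {p // p ∈ C} := ⟨(v.1.1 - 1, v.1.2), hmemw⟩ with hw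
        have hlo := hg.g2 u w (by show u.1.2 = v.1.2; omega) (by show u.1.1 ≤ v.1.1 - 1; omega)
        have hhi := hg.g2 w v rfl (by show v.1.1 - 1 ≤ v.1.1; omega)
        rw [eu] at hlo; rw [ev] at hhi
        simp only [Option.getD_none] at hlo hhi
        have ew : κ w = none := by
          cases ew' : κ w with
          | none => rfl
          | some t =>
            exfalso
            rw [ew'] at hlo hhi
            simp only [Option.getD_some] at hlo hhi
            exact (hg.g0 w t ew').1 (le_antisymm hhi hlo)
        have hTv : T v = sf := fab v ev ⟨by omega, hmemw, ew⟩
        have hTu := fnone u eu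
        refine Fin.le_def.2 ?_
        rw [hTv]
        rcases hTu with h | h <;> rw [h] <;> omega
      · have hTu := fnone u eu
        obtain ⟨t, ht⟩ := Option.ne_none_iff_exists'.1 ev
        have hTv := fsome v t ht
        have hle := hg.g2 u v he hj
        rw [eu, ht] at hle
        simp only [Option.getD_none, Option.getD_some] at hle
        have h0 := hg.g0 v t ht
        have e1 : (t : ℕ) ≠ (rf : ℕ) := fun h => h0.1 (Fin.ext h)
        have e2 : (t : ℕ) ≠ (sf : ℕ) := fun h => h0.2 (Fin.ext h)
        have hle' := Fin.le_def.1 hle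
        refine Fin.le_def.2 ?_
        rw [hTv]
        rcases hTu with h | h <;> rw [h] <;> omega
      · obtain ⟨t, ht⟩ := Option.ne_none_iff_exists'.1 eu
        have hTu := fsome u t ht
        have hTv := fnone v ev
        have hle := hg.g2 u v he hj
        rw [ev, ht] at hle
        simp only [Option.getD_none, Option.getD_some] at hle
        have h0 := hg.g0 u t ht
        have e1 : (t : ℕ) ≠ (rf : ℕ) := fun h => h0.1 (Fin.ext h)
        have hle' := Fin.le_def.1 hle
        refine Fin.le_def.2 ?_
        rw [hTu]
        rcases hTv with h | h <;> rw [h] <;> omega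
      · obtain ⟨t, ht⟩ := Option.ne_none_iff_exists'.1 eu
        obtain ⟨t', ht'⟩ := Option.ne_none_iff_exists'.1 ev
        have hle := hg.g2 u v he hj
        rw [ht, ht'] at hle
        simp only [Option.getD_some] at hle
        rw [fsome u t ht, fsome v t' ht']
        exact hle
    refine ⟨⟨mono1, mono2, ?_, ?_⟩, hkey⟩
    · -- no two equal unprimed in a column
      intro u v he hne hp heq
      by_cases eu : κ u = none
      · have hTu : T u = rf := by
          rcases fnone u eu with h | h
          · exact h
          · rw [h, hc.hrp] at hp; exact absurd hp (by simp)
        have ev : κ v = none := by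
          cases ev' : κ v with
          | none => rfl
          | some t =>
            exfalso
            have := fsome v t ev'
            rw [← heq, hTu] at this
            exact (hg.g0 v t ev').1 this.symm
        have hTv : T v = rf := by rw [← heq, hTu]
        have key : ∀ a b : {p // p ∈ C}, a.1.2 = b.1.2 → a.1.1 < b.1.1 →
            κ a = none → κ b = none → T a = rf → T b = rf → False := by
          intro a b e hab ha hb hTa hTb
          have hb1 : b.1 = (b.1.1, a.1.2) := Prod.ext rfl e.symm
          have hmemw : (a.1.1 + 1, a.1.2) ∈ C :=
            hCol a.1.1 b.1.1 (a.1.1 + 1) a.1.2 a.2 (hb1 ▸ b.2) (by omega) (by omega)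
          set w : {p // p ∈ C} := ⟨(a.1.1 + 1, a.1.2), hmemw⟩ with hwd
          have hlo := hg.g2 a w rfl (by show a.1.1 ≤ a.1.1 + 1; omega)
          have hhi := hg.g2 w b (by show a.1.2 = b.1.2; omega)
            (by show a.1.1 + 1 ≤ b.1.1; omega)
          rw [ha] at hlo; rw [hb] at hhi
          simp only [Option.getD_none] at hlo hhi
          have ew : κ w = none := by
            cases ew' : κ w with
            | none => rfl
            | some t =>
              exfalso
              rw [ew'] at hlo hhi
              simp only [Option.getD_some] at hlo hhi
              exact (hg.g0 w t ew').1 (le_antisymm hhi hlo)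
          have habw : abIn κ w := by
            refine ⟨by show a.1.1 + 1 ≠ 0; omega, ?_⟩
            show ∃ h : (a.1.1 + 1 - 1, a.1.2) ∈ C, κ ⟨(a.1.1 + 1 - 1, a.1.2), h⟩ = none
            exact ⟨a.2, ha⟩
          have hTw : T w = sf := fab w ew habw
          have := Fin.le_def.1 (mono2 w b (by show a.1.2 = b.1.2; omega)
            (by show a.1.1 + 1 ≤ b.1.1; omega))
          rw [hTw, hTb] at this
          omega
        rcases Nat.lt_or_ge u.1.1 v.1.1 with hlt | hge
        · exact key u v he hlt eu ev hTu hTv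
        · exact key v u he.symm (by omega) ev eu hTv hTu
      · obtain ⟨t, ht⟩ := Option.ne_none_iff_exists'.1 eu
        have hTu := fsome u t ht
        cases ev : κ v with
        | none =>
          have h0 := hg.g0 u t ht
          rcases fnone v ev with h | h
          · exact h0.1 (by rw [← hTu, heq, h])
          · exact h0.2 (by rw [← hTu, heq, h])
        | some t' =>
          exact hg.g3 u v he hne t t' ht ev (by rw [← hTu]; exact hp)
            (by rw [← hTu, ← fsome v t' ev, heq])
    · -- no two equal primed in a row
      intro u v he hne hp heq
      by_cases eu : κ u = none
      · have hTu : T u = sf := by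
          rcases fnone u eu with h | h
          · rw [h, hc.hru] at hp; exact absurd hp (by simp)
          · exact h
        have ev : κ v = none := by
          cases ev' : κ v with
          | none => rfl
          | some t =>
            exfalso
            have := fsome v t ev'
            rw [← heq, hTu] at this
            exact (hg.g0 v t ev').2 this.symm
        have hTv : T v = sf := by rw [← heq, hTu]
        have key : ∀ a b : {p // p ∈ C}, a.1.1 = b.1.1 → a.1.2 < b.1.2 →
            κ a = none → κ b = none → T a = sf → False := by
          intro a b e hab ha hb hTa
          have hb1 : b.1 = (a.1.1, b.1.2) := Prod.ext e.symm rfl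
          have hmemw : (a.1.1, a.1.2 + 1) ∈ C :=
            hRow a.1.1 a.1.2 b.1.2 (a.1.2 + 1) a.2 (hb1 ▸ b.2) (by omega) (by omega)
          set w : {p // p ∈ C} := ⟨(a.1.1, a.1.2 + 1), hmemw⟩ with hwd
          have hlo := hg.g1 a w rfl (by show a.1.2 ≤ a.1.2 + 1; omega)
          have hhi := hg.g1 w b (by show a.1.1 = b.1.1; omega)
            (by show a.1.2 + 1 ≤ b.1.2; omega)
          rw [ha] at hlo; rw [hb] at hhi
          simp only [Option.getD_none] at hlo hhi
          have ew : κ w = none := by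
            cases ew' : κ w with
            | none => rfl
            | some t =>
              exfalso
              rw [ew'] at hlo hhi
              simp only [Option.getD_some] at hlo hhi
              exact (hg.g0 w t ew').1 (le_antisymm hhi hlo)
          have hTa' : T a = rf := frt a ha ⟨hmemw, ew⟩
          rw [hTa] at hTa'
          exact hc.rf_ne_sf hTa'.symm
        rcases Nat.lt_or_ge u.1.2 v.1.2 with hlt | hge
        · exact key u v he hlt eu ev hTu
        · exact key v u he.symm (by omega) ev eu hTv
      · obtain ⟨t, ht⟩ := Option.ne_none_iff_exists'.1 eu
        have hTu := fsome u t ht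
        cases ev : κ v with
        | none =>
          have h0 := hg.g0 u t ht
          rcases fnone v ev with h | h
          · exact h0.1 (by rw [← hTu, heq, h])
          · exact h0.2 (by rw [← hTu, heq, h])
        | some t' =>
          exact hg.g4 u v he hne t t' ht ev (by rw [← hTu]; exact hp)
            (by rw [← hTu, ← fsome v t' ev, heq])

theorem supertab_iff_prm' (hc : SwapCtx prm prm' rf sf)
    (hRow : ∀ i j1 j2 j, (i, j1) ∈ C → (i, j2) ∈ C → j1 ≤ j → j ≤ j2 → (i, j) ∈ C)
    (hCol : ∀ i1 i2 i j, (i1, j) ∈ C → (i2, j) ∈ C → i1 ≤ i → i ≤ i2 → (i, j) ∈ C)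
    {κ : {p // p ∈ C} → Option (Fin NA)} (hg : GoodKey prm rf sf C κ)
    (T : {p // p ∈ C} → Fin NA) :
    (IsSuperTab C prm' T ∧ okey rf sf T = κ) ↔ ∀ u, T u ∈ alw' rf sf κ u := by
  have hcons := hc.hcons
  constructor
  · rintro ⟨hT, rfl⟩
    obtain ⟨h1, h2, h3, h4⟩ := hT
    have hrowSF : ∀ u v : {p // p ∈ C}, u.1.1 = v.1.1 → u.1.2 < v.1.2 →
        (T u = rf ∨ T u = sf) → (T v = rf ∨ T v = sf) → T v = sf := by
      intro u v e hj hu hv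
      rcases hv with h | h
      · exfalso
        have hle := Fin.le_def.1 (h1 u v e (le_of_lt hj))
        have hu' : T u = rf := by
          rcases hu with h' | h'
          · exact h'
          · rw [h', h] at hle; omega
        exact h4 u v e (by omega) (by rw [hu']; exact hc.hru') (by rw [hu', h])
      · exact h
    have hcolRF : ∀ u v : {p // p ∈ C}, u.1.2 = v.1.2 → u.1.1 < v.1.1 →
        (T u = rf ∨ T u = sf) → (T v = rf ∨ T v = sf) → T u = rf := by
      intro u v e hi hu hv
      rcases hu with h | h
      · exact h
      · exfalso
        have hle := Fin.le_def.1 (h2 u v e (le_of_lt hi))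
        have hv' : T v = sf := by
          rcases hv with h' | h'
          · rw [h, h'] at hle; omega
          · exact h'
        exact h3 u v e (by omega) (by rw [h]; exact hc.hrp') (by rw [h, hv'])
    intro u
    cases e : okey rf sf T u with
    | some t =>
      rw [alw'_of_some (frcP'_some rf sf e), Finset.mem_singleton]
      exact (okey_eq_some e).1
    | none =>
      have pu := okey_eq_none_iff.1 e
      by_cases hlt : ltIn (okey rf sf T) u
      · rw [alw'_of_some (frcP'_lt rf sf e hlt), Finset.mem_singleton]
        obtain ⟨hne0, hmem, hnone⟩ := hlt
        exact hrowSF ⟨(u.1.1, u.1.2 - 1), hmem⟩ u rfl (by show u.1.2 - 1 < u.1.2; omega)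
          (okey_eq_none_iff.1 hnone) pu
      by_cases hbw : bwIn (okey rf sf T) u
      · rw [alw'_of_some (frcP'_bw rf sf e hlt hbw), Finset.mem_singleton]
        obtain ⟨hmem, hnone⟩ := hbw
        exact hcolRF u ⟨(u.1.1 + 1, u.1.2), hmem⟩ rfl (by show u.1.1 < u.1.1 + 1; omega)
          pu (okey_eq_none_iff.1 hnone)
      · rw [alw'_of_none (frcP'_free rf sf e hlt hbw)]
        rcases pu with h | h
        · exact Finset.mem_insert.2 (Or.inl h)
        · exact Finset.mem_insert.2 (Or.inr (Finset.mem_singleton.2 h))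
  · intro hall
    have fsome : ∀ (u : {p // p ∈ C}) t, κ u = some t → T u = t := by
      intro u t h
      have hu := hall u
      rw [alw'_of_some (frcP'_some rf sf h), Finset.mem_singleton] at hu
      exact hu
    have fnone : ∀ u : {p // p ∈ C}, κ u = none → T u = rf ∨ T u = sf := by
      intro u h
      have hu := hall u
      by_cases hlt : ltIn κ u
      · rw [alw'_of_some (frcP'_lt rf sf h hlt), Finset.mem_singleton] at hu
        exact Or.inr hu
      by_cases hbw : bwIn κ u
      · rw [alw'_of_some (frcP'_bw rf sf h hlt hbw), Finset.mem_singleton] at hu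
        exact Or.inl hu
      · rw [alw'_of_none (frcP'_free rf sf h hlt hbw), Finset.mem_insert,
          Finset.mem_singleton] at hu
        exact hu
    have flt : ∀ u : {p // p ∈ C}, κ u = none → ltIn κ u → T u = sf := by
      intro u h hlt
      have hu := hall u
      rw [alw'_of_some (frcP'_lt rf sf h hlt), Finset.mem_singleton] at hu
      exact hu
    have fbw : ∀ u : {p // p ∈ C}, κ u = none → bwIn κ u → T u = rf := by
      intro u h hbw
      have hlt : ¬ltIn κ u := by
        intro hlt
        obtain ⟨hne0, hmemw, hnw⟩ := hlt
        obtain ⟨hmemv, hnv⟩ := hbw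
        exact hg.g6 u ⟨(u.1.1 + 1, u.1.2), hmemv⟩ ⟨(u.1.1, u.1.2 - 1), hmemw⟩
          rfl (by show u.1.2 - 1 + 1 = u.1.2; omega) rfl rfl h hnv hnw
      have hu := hall u
      rw [alw'_of_some (frcP'_bw rf sf h hlt hbw), Finset.mem_singleton] at hu
      exact hu
    have hkey : okey rf sf T = κ := by
      funext u
      cases e : κ u with
      | none => rw [okey_eq_none_iff.2 (fnone u e)]
      | some t =>
        have h0 := hg.g0 u t e
        have h1 := fsome u t e
        rw [okey_some_of_not (by rw [h1]; push_neg; exact h0), h1]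
    have mono1 : ∀ u v : {p // p ∈ C}, u.1.1 = v.1.1 → u.1.2 ≤ v.1.2 → T u ≤ T v := by
      intro u v he hj
      rcases eq_or_lt_of_le hj with hje | hjl
      · rw [show u = v from Subtype.ext (Prod.ext he hje)]
      by_cases eu : κ u = none <;> by_cases ev : κ v = none
      · have hu1 : u.1 = (v.1.1, u.1.2) := Prod.ext he rfl
        have hmemw : (v.1.1, v.1.2 - 1) ∈ C :=
          hRow v.1.1 u.1.2 v.1.2 (v.1.2 - 1) (hu1 ▸ u.2) v.2 (by omega) (by omega)
        set w : {p // p ∈ C} := ⟨(v.1.1, v.1.2 - 1), hmemw⟩ with hw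
        have hlo := hg.g1 u w (by show u.1.1 = v.1.1; omega) (by show u.1.2 ≤ v.1.2 - 1; omega)
        have hhi := hg.g1 w v rfl (by show v.1.2 - 1 ≤ v.1.2; omega)
        rw [eu] at hlo; rw [ev] at hhi
        simp only [Option.getD_none] at hlo hhi
        have ew : κ w = none := by
          cases ew' : κ w with
          | none => rfl
          | some t =>
            exfalso
            rw [ew'] at hlo hhi
            simp only [Option.getD_some] at hlo hhi
            exact (hg.g0 w t ew').1 (le_antisymm hhi hlo)
        have hTv : T v = sf := flt v ev ⟨by omega, hmemw, ew⟩
        have hTu := fnone u eu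
        refine Fin.le_def.2 ?_
        rw [hTv]
        rcases hTu with h | h <;> rw [h] <;> omega
      · have hTu := fnone u eu
        obtain ⟨t, ht⟩ := Option.ne_none_iff_exists'.1 ev
        have hTv := fsome v t ht
        have hle := hg.g1 u v he hj
        rw [eu, ht] at hle
        simp only [Option.getD_none, Option.getD_some] at hle
        have h0 := hg.g0 v t ht
        have e1 : (t : ℕ) ≠ (rf : ℕ) := fun h => h0.1 (Fin.ext h)
        have e2 : (t : ℕ) ≠ (sf : ℕ) := fun h => h0.2 (Fin.ext h)
        have hle' := Fin.le_def.1 hle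
        refine Fin.le_def.2 ?_
        rw [hTv]
        rcases hTu with h | h <;> rw [h] <;> omega
      · obtain ⟨t, ht⟩ := Option.ne_none_iff_exists'.1 eu
        have hTu := fsome u t ht
        have hTv := fnone v ev
        have hle := hg.g1 u v he hj
        rw [ev, ht] at hle
        simp only [Option.getD_none, Option.getD_some] at hle
        have h0 := hg.g0 u t ht
        have e1 : (t : ℕ) ≠ (rf : ℕ) := fun h => h0.1 (Fin.ext h)
        have hle' := Fin.le_def.1 hle
        refine Fin.le_def.2 ?_
        rw [hTu]
        rcases hTv with h | h <;> rw [h] <;> omega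
      · obtain ⟨t, ht⟩ := Option.ne_none_iff_exists'.1 eu
        obtain ⟨t', ht'⟩ := Option.ne_none_iff_exists'.1 ev
        have hle := hg.g1 u v he hj
        rw [ht, ht'] at hle
        simp only [Option.getD_some] at hle
        rw [fsome u t ht, fsome v t' ht']
        exact hle
    have mono2 : ∀ u v : {p // p ∈ C}, u.1.2 = v.1.2 → u.1.1 ≤ v.1.1 → T u ≤ T v := by
      intro u v he hj
      rcases eq_or_lt_of_le hj with hje | hjl
      · rw [show u = v from Subtype.ext (Prod.ext hje he)]
      by_cases eu : κ u = none <;> by_cases ev : κ v = none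
      · have hv1 : v.1 = (v.1.1, u.1.2) := Prod.ext rfl he.symm
        have hmemw : (u.1.1 + 1, u.1.2) ∈ C :=
          hCol u.1.1 v.1.1 (u.1.1 + 1) u.1.2 u.2 (hv1 ▸ v.2) (by omega) (by omega)
        set w : {p // p ∈ C} := ⟨(u.1.1 + 1, u.1.2), hmemw⟩ with hw
        have hlo := hg.g2 u w rfl (by show u.1.1 ≤ u.1.1 + 1; omega)
        have hhi := hg.g2 w v (by show u.1.2 = v.1.2; omega) (by show u.1.1 + 1 ≤ v.1.1; omega)
        rw [eu] at hlo; rw [ev] at hhi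
        simp only [Option.getD_none] at hlo hhi
        have ew : κ w = none := by
          cases ew' : κ w with
          | none => rfl
          | some t =>
            exfalso
            rw [ew'] at hlo hhi
            simp only [Option.getD_some] at hlo hhi
            exact (hg.g0 w t ew').1 (le_antisymm hhi hlo)
        have hTu : T u = rf := fbw u eu ⟨hmemw, ew⟩
        have hTv := fnone v ev
        refine Fin.le_def.2 ?_
        rw [hTu]
        rcases hTv with h | h <;> rw [h] <;> omega
      · have hTu := fnone u eu
        obtain ⟨t, ht⟩ := Option.ne_none_iff_exists'.1 ev
        have hTv := fsome v t ht
        have hle := hg.g2 u v he hj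
        rw [eu, ht] at hle
        simp only [Option.getD_none, Option.getD_some] at hle
        have h0 := hg.g0 v t ht
        have e1 : (t : ℕ) ≠ (rf : ℕ) := fun h => h0.1 (Fin.ext h)
        have e2 : (t : ℕ) ≠ (sf : ℕ) := fun h => h0.2 (Fin.ext h)
        have hle' := Fin.le_def.1 hle
        refine Fin.le_def.2 ?_
        rw [hTv]
        rcases hTu with h | h <;> rw [h] <;> omega
      · obtain ⟨t, ht⟩ := Option.ne_none_iff_exists'.1 eu
        have hTu := fsome u t ht
        have hTv := fnone v ev
        have hle := hg.g2 u v he hj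
        rw [ev, ht] at hle
        simp only [Option.getD_none, Option.getD_some] at hle
        have h0 := hg.g0 u t ht
        have e1 : (t : ℕ) ≠ (rf : ℕ) := fun h => h0.1 (Fin.ext h)
        have hle' := Fin.le_def.1 hle
        refine Fin.le_def.2 ?_
        rw [hTu]
        rcases hTv with h | h <;> rw [h] <;> omega
      · obtain ⟨t, ht⟩ := Option.ne_none_iff_exists'.1 eu
        obtain ⟨t', ht'⟩ := Option.ne_none_iff_exists'.1 ev
        have hle := hg.g2 u v he hj
        rw [ht, ht'] at hle
        simp only [Option.getD_some] at hle
        rw [fsome u t ht, fsome v t' ht']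
        exact hle
    refine ⟨⟨mono1, mono2, ?_, ?_⟩, hkey⟩
    · -- no two equal `prm'`-unprimed (i.e. `sf`) in a column
      intro u v he hne hp heq
      by_cases eu : κ u = none
      · have hTu : T u = sf := by
          rcases fnone u eu with h | h
          · rw [h, hc.hru'] at hp; exact absurd hp (by simp)
          · exact h
        have ev : κ v = none := by
          cases ev' : κ v with
          | none => rfl
          | some t =>
            exfalso
            have := fsome v t ev'
            rw [← heq, hTu] at this
            exact (hg.g0 v t ev').2 this.symm
        have hTv : T v = sf := by rw [← heq, hTu]
        have key : ∀ a b : {p // p ∈ C}, a.1.2 = b.1.2 → a.1.1 < b.1.1 →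
            κ a = none → κ b = none → T a = sf → False := by
          intro a b e hab ha hb hTa
          have hb1 : b.1 = (b.1.1, a.1.2) := Prod.ext rfl e.symm
          have hmemw : (a.1.1 + 1, a.1.2) ∈ C :=
            hCol a.1.1 b.1.1 (a.1.1 + 1) a.1.2 a.2 (hb1 ▸ b.2) (by omega) (by omega)
          set w : {p // p ∈ C} := ⟨(a.1.1 + 1, a.1.2), hmemw⟩ with hwd
          have hlo := hg.g2 a w rfl (by show a.1.1 ≤ a.1.1 + 1; omega)
          have hhi := hg.g2 w b (by show a.1.2 = b.1.2; omega)
            (by show a.1.1 + 1 ≤ b.1.1; omega)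
          rw [ha] at hlo; rw [hb] at hhi
          simp only [Option.getD_none] at hlo hhi
          have ew : κ w = none := by
            cases ew' : κ w with
            | none => rfl
            | some t =>
              exfalso
              rw [ew'] at hlo hhi
              simp only [Option.getD_some] at hlo hhi
              exact (hg.g0 w t ew').1 (le_antisymm hhi hlo)
          have hTa' : T a = rf := fbw a ha ⟨hmemw, ew⟩
          rw [hTa] at hTa'
          exact hc.rf_ne_sf hTa'.symm
        rcases Nat.lt_or_ge u.1.1 v.1.1 with hlt | hge
        · exact key u v he hlt eu ev hTu
        · exact key v u he.symm (by omega) ev eu hTv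
      · obtain ⟨t, ht⟩ := Option.ne_none_iff_exists'.1 eu
        have hTu := fsome u t ht
        cases ev : κ v with
        | none =>
          have h0 := hg.g0 u t ht
          rcases fnone v ev with h | h
          · exact h0.1 (by rw [← hTu, heq, h])
          · exact h0.2 (by rw [← hTu, heq, h])
        | some t' =>
          have h0 := hg.g0 u t ht
          refine hg.g3 u v he hne t t' ht ev ?_ (by rw [← hTu, ← fsome v t' ev, heq])
          rw [← hc.hout t h0.1 h0.2, ← hTu]
          exact hp
    · -- no two equal `prm'`-primed (i.e. `rf`) in a row
      intro u v he hne hp heq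
      by_cases eu : κ u = none
      · have hTu : T u = rf := by
          rcases fnone u eu with h | h
          · exact h
          · rw [h, hc.hrp'] at hp; exact absurd hp (by simp)
        have ev : κ v = none := by
          cases ev' : κ v with
          | none => rfl
          | some t =>
            exfalso
            have := fsome v t ev'
            rw [← heq, hTu] at this
            exact (hg.g0 v t ev').1 this.symm
        have hTv : T v = rf := by rw [← heq, hTu]
        have key : ∀ a b : {p // p ∈ C}, a.1.1 = b.1.1 → a.1.2 < b.1.2 →
            κ a = none → κ b = none → T a = rf → T b = rf → False := by
          intro a b e hab ha hb hTa hTb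
          have hb1 : b.1 = (a.1.1, b.1.2) := Prod.ext e.symm rfl
          have hmemw : (a.1.1, a.1.2 + 1) ∈ C :=
            hRow a.1.1 a.1.2 b.1.2 (a.1.2 + 1) a.2 (hb1 ▸ b.2) (by omega) (by omega)
          set w : {p // p ∈ C} := ⟨(a.1.1, a.1.2 + 1), hmemw⟩ with hwd
          have hlo := hg.g1 a w rfl (by show a.1.2 ≤ a.1.2 + 1; omega)
          have hhi := hg.g1 w b (by show a.1.1 = b.1.1; omega)
            (by show a.1.2 + 1 ≤ b.1.2; omega)
          rw [ha] at hlo; rw [hb] at hhi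
          simp only [Option.getD_none] at hlo hhi
          have ew : κ w = none := by
            cases ew' : κ w with
            | none => rfl
            | some t =>
              exfalso
              rw [ew'] at hlo hhi
              simp only [Option.getD_some] at hlo hhi
              exact (hg.g0 w t ew').1 (le_antisymm hhi hlo)
          have hltw : ltIn κ w := by
            refine ⟨by show a.1.2 + 1 ≠ 0; omega, ?_⟩
            show ∃ h : (a.1.1, a.1.2 + 1 - 1) ∈ C, κ ⟨(a.1.1, a.1.2 + 1 - 1), h⟩ = none
            exact ⟨a.2, ha⟩
          have hTw : T w = sf := flt w ew hltw
          have := Fin.le_def.1 (mono1 w b (by show a.1.1 = b.1.1; omega)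
            (by show a.1.2 + 1 ≤ b.1.2; omega))
          rw [hTw, hTb] at this
          omega
        rcases Nat.lt_or_ge u.1.2 v.1.2 with hlt | hge
        · exact key u v he hlt eu ev hTu hTv
        · exact key v u he.symm (by omega) ev eu hTv hTu
      · obtain ⟨t, ht⟩ := Option.ne_none_iff_exists'.1 eu
        have hTu := fsome u t ht
        cases ev : κ v with
        | none =>
          have h0 := hg.g0 u t ht
          rcases fnone v ev with h | h
          · exact h0.1 (by rw [← hTu, heq, h])
          · exact h0.2 (by rw [← hTu, heq, h])
        | some t' =>
          have h0 := hg.g0 u t ht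
          refine hg.g4 u v he hne t t' ht ev ?_ (by rw [← hTu, ← fsome v t' ev, heq])
          rw [← hc.hout t h0.1 h0.2, ← hTu]
          exact hp

open Classical in
/-- Successor map along a ribbon: the region box of one higher content. -/
noncomputable def nxt (κ : {p // p ∈ C} → Option (Fin NA)) :
    {p // p ∈ C} → {p // p ∈ C} := fun u =>
  if h : rtIn κ u then ⟨(u.1.1, u.1.2 + 1), h.choose⟩
  else if h : abIn κ u then ⟨(u.1.1 - 1, u.1.2), h.2.choose⟩ else u

open Classical in
/-- Predecessor map along a ribbon: the region box of one lower content. -/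
noncomputable def prv (κ : {p // p ∈ C} → Option (Fin NA)) :
    {p // p ∈ C} → {p // p ∈ C} := fun v =>
  if h : ltIn κ v then ⟨(v.1.1, v.1.2 - 1), h.2.choose⟩
  else if h : bwIn κ v then ⟨(v.1.1 + 1, v.1.2), h.choose⟩ else v

theorem noLt {prm : Fin NA → Bool} {rf sf : Fin NA} {κ : {p // p ∈ C} → Option (Fin NA)}
    (hg : GoodKey prm rf sf C κ) {v u : {p // p ∈ C}}
    (hkv : κ v = none) (hku : κ u = none)
    (h1 : v.1.1 + 1 = u.1.1) (h2 : v.1.2 = u.1.2) : ¬ltIn κ v := by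
  rintro ⟨hne0, hmem, hnw⟩
  exact hg.g6 v u ⟨(v.1.1, v.1.2 - 1), hmem⟩ rfl
    (by show v.1.2 - 1 + 1 = v.1.2; omega) h1 h2 hkv hku hnw

theorem noRt {prm : Fin NA → Bool} {rf sf : Fin NA} {κ : {p // p ∈ C} → Option (Fin NA)}
    (hg : GoodKey prm rf sf C κ) {v w : {p // p ∈ C}}
    (hkv : κ v = none) (hkw : κ w = none)
    (h1 : w.1.1 + 1 = v.1.1) (h2 : w.1.2 = v.1.2) : ¬rtIn κ v := by
  rintro ⟨hmem, hnx⟩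
  exact hg.g5 v ⟨(v.1.1, v.1.2 + 1), hmem⟩ w h1 h2 rfl rfl hkv hnx hkw

theorem prod_alw_eq {A : Type*} [CommRing A] {m n : ℕ}
    (hc : SwapCtx prm prm' rf sf)
    {κ : {p // p ∈ C} → Option (Fin NA)} (hg : GoodKey prm rf sf C κ)
    (x : Fin m → A) (y : Fin n → A) (a : ℤ → A) :
    (∏ u : {p // p ∈ C}, ∑ t ∈ alw rf sf κ u, wFact prm x y a t (content u.1))
      = ∏ u : {p // p ∈ C}, ∑ t ∈ alw' rf sf κ u, wFact prm' x y a t (content u.1) := by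
  classical
  have hcons := hc.hcons
  set f : {p // p ∈ C} → A := fun u => ∑ t ∈ alw rf sf κ u, wFact prm x y a t (content u.1)
    with hf
  set f' : {p // p ∈ C} → A := fun u => ∑ t ∈ alw' rf sf κ u, wFact prm' x y a t (content u.1)
    with hf'
  have hnxt_rt : ∀ u : {p // p ∈ C}, (hrt : rtIn κ u) →
      nxt κ u = ⟨(u.1.1, u.1.2 + 1), hrt.choose⟩ := by
    intro u hrt; simp only [nxt]; rw [dif_pos hrt]
  have hnxt_ab : ∀ u : {p // p ∈ C}, ¬rtIn κ u → (hab : abIn κ u) →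
      nxt κ u = ⟨(u.1.1 - 1, u.1.2), hab.2.choose⟩ := by
    intro u hrt hab; simp only [nxt]; rw [dif_neg hrt, dif_pos hab]
  have hprv_lt : ∀ v : {p // p ∈ C}, (hlt : ltIn κ v) →
      prv κ v = ⟨(v.1.1, v.1.2 - 1), hlt.2.choose⟩ := by
    intro v hlt; simp only [prv]; rw [dif_pos hlt]
  have hprv_bw : ∀ v : {p // p ∈ C}, ¬ltIn κ v → (hbw : bwIn κ v) →
      prv κ v = ⟨(v.1.1 + 1, v.1.2), hbw.choose⟩ := by
    intro v hlt hbw; simp only [prv]; rw [dif_neg hlt, dif_pos hbw]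
  set s : Finset {p // p ∈ C} := Finset.univ.filter (fun u => κ u = none) with hs
  set p : {p // p ∈ C} → Prop := fun u => rtIn κ u ∨ abIn κ u with hp
  set p' : {p // p ∈ C} → Prop := fun u => ltIn κ u ∨ bwIn κ u with hp'
  have hmapi : ∀ u ∈ s.filter p, nxt κ u ∈ s.filter p' := by
    intro u hu
    simp only [hs, hp, Finset.mem_filter, Finset.mem_univ, true_and] at hu
    obtain ⟨hku, hpu⟩ := hu
    simp only [hs, hp', Finset.mem_filter, Finset.mem_univ, true_and]
    by_cases hrt : rtIn κ u
    · rw [hnxt_rt u hrt]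
      refine ⟨hrt.choose_spec, Or.inl ⟨by show u.1.2 + 1 ≠ 0; omega, ?_⟩⟩
      show ∃ h : (u.1.1, u.1.2 + 1 - 1) ∈ C, κ ⟨(u.1.1, u.1.2 + 1 - 1), h⟩ = none
      exact ⟨u.2, hku⟩
    · have hab : abIn κ u := hpu.resolve_left hrt
      have hne0 := hab.1
      rw [hnxt_ab u hrt hab]
      refine ⟨hab.2.choose_spec, Or.inr ?_⟩
      have he : (u.1.1 - 1 + 1, u.1.2) = u.1 :=
        Prod.ext (by show u.1.1 - 1 + 1 = u.1.1; omega) rfl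
      have hmem : (u.1.1 - 1 + 1, u.1.2) ∈ C := by rw [he]; exact u.2
      refine ⟨hmem, ?_⟩
      have he2 : (⟨(u.1.1 - 1 + 1, u.1.2), hmem⟩ : {p // p ∈ C}) = u := Subtype.ext he
      rw [he2]; exact hku
  have hmapj : ∀ v ∈ s.filter p', prv κ v ∈ s.filter p := by
    intro v hv
    simp only [hs, hp', Finset.mem_filter, Finset.mem_univ, true_and] at hv
    obtain ⟨hkv, hpv⟩ := hv
    simp only [hs, hp, Finset.mem_filter, Finset.mem_univ, true_and]
    by_cases hlt : ltIn κ v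
    · have hne0 := hlt.1
      rw [hprv_lt v hlt]
      refine ⟨hlt.2.choose_spec, Or.inl ?_⟩
      have he : (v.1.1, v.1.2 - 1 + 1) = v.1 :=
        Prod.ext rfl (by show v.1.2 - 1 + 1 = v.1.2; omega)
      have hmem : (v.1.1, v.1.2 - 1 + 1) ∈ C := by rw [he]; exact v.2
      refine ⟨hmem, ?_⟩
      have he2 : (⟨(v.1.1, v.1.2 - 1 + 1), hmem⟩ : {p // p ∈ C}) = v := Subtype.ext he
      rw [he2]; exact hkv
    · have hbw : bwIn κ v := hpv.resolve_left hlt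
      rw [hprv_bw v hlt hbw]
      refine ⟨hbw.choose_spec, Or.inr ⟨by show v.1.1 + 1 ≠ 0; omega, ?_⟩⟩
      show ∃ h : (v.1.1 + 1 - 1, v.1.2) ∈ C, κ ⟨(v.1.1 + 1 - 1, v.1.2), h⟩ = none
      exact ⟨v.2, hkv⟩
  have hleft : ∀ u ∈ s.filter p, prv κ (nxt κ u) = u := by
    intro u hu
    simp only [hs, hp, Finset.mem_filter, Finset.mem_univ, true_and] at hu
    obtain ⟨hku, hpu⟩ := hu
    by_cases hrt : rtIn κ u
    · rw [hnxt_rt u hrt]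
      set v : {p // p ∈ C} := ⟨(u.1.1, u.1.2 + 1), hrt.choose⟩ with hv
      have hlt : ltIn κ v := by
        refine ⟨by show u.1.2 + 1 ≠ 0; omega, ?_⟩
        show ∃ h : (u.1.1, u.1.2 + 1 - 1) ∈ C, κ ⟨(u.1.1, u.1.2 + 1 - 1), h⟩ = none
        exact ⟨u.2, hku⟩
      rw [hprv_lt v hlt]
      exact Subtype.ext (Prod.ext rfl (by show u.1.2 + 1 - 1 = u.1.2; omega))
    · have hab : abIn κ u := hpu.resolve_left hrt
      have hne0 := hab.1
      rw [hnxt_ab u hrt hab]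
      set v : {p // p ∈ C} := ⟨(u.1.1 - 1, u.1.2), hab.2.choose⟩ with hv
      have hnlt : ¬ltIn κ v := noLt hg hab.2.choose_spec hku
        (by show u.1.1 - 1 + 1 = u.1.1; omega) rfl
      have hbw : bwIn κ v := by
        have he : (u.1.1 - 1 + 1, u.1.2) = u.1 :=
          Prod.ext (by show u.1.1 - 1 + 1 = u.1.1; omega) rfl
        have hmem : (u.1.1 - 1 + 1, u.1.2) ∈ C := by rw [he]; exact u.2
        refine ⟨hmem, ?_⟩
        have he2 : (⟨(u.1.1 - 1 + 1, u.1.2), hmem⟩ : {p // p ∈ C}) = u := Subtype.ext he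
        rw [he2]; exact hku
      rw [hprv_bw v hnlt hbw]
      exact Subtype.ext (Prod.ext (by show u.1.1 - 1 + 1 = u.1.1; omega) rfl)
  have hright : ∀ v ∈ s.filter p', nxt κ (prv κ v) = v := by
    intro v hv
    simp only [hs, hp', Finset.mem_filter, Finset.mem_univ, true_and] at hv
    obtain ⟨hkv, hpv⟩ := hv
    by_cases hlt : ltIn κ v
    · have hne0 := hlt.1
      rw [hprv_lt v hlt]
      set u : {p // p ∈ C} := ⟨(v.1.1, v.1.2 - 1), hlt.2.choose⟩ with hu
      have hrt : rtIn κ u := by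
        have he : (v.1.1, v.1.2 - 1 + 1) = v.1 :=
          Prod.ext rfl (by show v.1.2 - 1 + 1 = v.1.2; omega)
        have hmem : (v.1.1, v.1.2 - 1 + 1) ∈ C := by rw [he]; exact v.2
        refine ⟨hmem, ?_⟩
        have he2 : (⟨(v.1.1, v.1.2 - 1 + 1), hmem⟩ : {p // p ∈ C}) = v := Subtype.ext he
        rw [he2]; exact hkv
      rw [hnxt_rt u hrt]
      exact Subtype.ext (Prod.ext rfl (by show v.1.2 - 1 + 1 = v.1.2; omega))
    · have hbw : bwIn κ v := hpv.resolve_left hlt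
      rw [hprv_bw v hlt hbw]
      set u : {p // p ∈ C} := ⟨(v.1.1 + 1, v.1.2), hbw.choose⟩ with hu
      have hnrt : ¬rtIn κ u := noRt hg hbw.choose_spec hkv rfl rfl
      have hab : abIn κ u := by
        refine ⟨by show v.1.1 + 1 ≠ 0; omega, ?_⟩
        show ∃ h : (v.1.1 + 1 - 1, v.1.2) ∈ C, κ ⟨(v.1.1 + 1 - 1, v.1.2), h⟩ = none
        exact ⟨v.2, hkv⟩
      rw [hnxt_ab u hnrt hab]
      exact Subtype.ext (Prod.ext (by show v.1.1 + 1 - 1 = v.1.1; omega) rfl)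
  have hfac : ∀ u ∈ s.filter p, f u = f' (nxt κ u) := by
    intro u hu
    simp only [hs, hp, Finset.mem_filter, Finset.mem_univ, true_and] at hu
    obtain ⟨hku, hpu⟩ := hu
    by_cases hrt : rtIn κ u
    · rw [hnxt_rt u hrt]
      set v : {p // p ∈ C} := ⟨(u.1.1, u.1.2 + 1), hrt.choose⟩ with hv
      have hkvn : κ v = none := hrt.choose_spec
      have hlt : ltIn κ v := by
        refine ⟨by show u.1.2 + 1 ≠ 0; omega, ?_⟩
        show ∃ h : (u.1.1, u.1.2 + 1 - 1) ∈ C, κ ⟨(u.1.1, u.1.2 + 1 - 1), h⟩ = none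
        exact ⟨u.2, hku⟩
      rw [hf, hf']
      simp only
      rw [alw_of_some (frcP_rt rf sf hku hrt), alw'_of_some (frcP'_lt rf sf hkvn hlt),
        Finset.sum_singleton, Finset.sum_singleton]
      have hcont : content v.1 = content u.1 + 1 := by
        show ((u.1.2 + 1 : ℕ) : ℤ) - ((u.1.1 : ℕ) : ℤ) = ((u.1.2 : ℕ) : ℤ) - ((u.1.1 : ℕ) : ℤ) + 1
        push_cast; ring
      rw [hcont]
      exact hc.wFact_rf x y a (content u.1)
    · have hab : abIn κ u := hpu.resolve_left hrt
      have hne0 := hab.1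
      rw [hnxt_ab u hrt hab]
      set v : {p // p ∈ C} := ⟨(u.1.1 - 1, u.1.2), hab.2.choose⟩ with hv
      have hkvn : κ v = none := hab.2.choose_spec
      have hnlt : ¬ltIn κ v := noLt hg hkvn hku
        (by show u.1.1 - 1 + 1 = u.1.1; omega) rfl
      have hbw : bwIn κ v := by
        have he : (u.1.1 - 1 + 1, u.1.2) = u.1 :=
          Prod.ext (by show u.1.1 - 1 + 1 = u.1.1; omega) rfl
        have hmem : (u.1.1 - 1 + 1, u.1.2) ∈ C := by rw [he]; exact u.2
        refine ⟨hmem, ?_⟩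
        have he2 : (⟨(u.1.1 - 1 + 1, u.1.2), hmem⟩ : {p // p ∈ C}) = u := Subtype.ext he
        rw [he2]; exact hku
      rw [hf, hf']
      simp only
      rw [alw_of_some (frcP_ab rf sf hku hrt hab), alw'_of_some (frcP'_bw rf sf hkvn hnlt hbw),
        Finset.sum_singleton, Finset.sum_singleton]
      have hcont : content v.1 = content u.1 + 1 := by
        show ((u.1.2 : ℕ) : ℤ) - ((u.1.1 - 1 : ℕ) : ℤ) = ((u.1.2 : ℕ) : ℤ) - ((u.1.1 : ℕ) : ℤ) + 1
        omega
      rw [hcont]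
      exact hc.wFact_sf x y a (content u.1)
  rw [← Finset.prod_filter_mul_prod_filter_not Finset.univ (fun u => κ u = none) f,
    ← Finset.prod_filter_mul_prod_filter_not Finset.univ (fun u => κ u = none) f']
  have houter : (Finset.univ.filter (fun u : {p // p ∈ C} => ¬κ u = none)).prod f
      = (Finset.univ.filter (fun u : {p // p ∈ C} => ¬κ u = none)).prod f' := by
    refine Finset.prod_congr rfl fun u hu => ?_
    simp only [Finset.mem_filter, Finset.mem_univ, true_and] at hu
    obtain ⟨t, ht⟩ := Option.ne_none_iff_exists'.1 hu
    rw [hf, hf']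
    simp only
    rw [alw_of_some (frcP_some rf sf ht), alw'_of_some (frcP'_some rf sf ht),
      Finset.sum_singleton, Finset.sum_singleton]
    exact hc.wFact_out x y a (hg.g0 u t ht).1 (hg.g0 u t ht).2 (content u.1)
  have hinner : (Finset.univ.filter (fun u : {p // p ∈ C} => κ u = none)).prod f
      = (Finset.univ.filter (fun u : {p // p ∈ C} => κ u = none)).prod f' := by
    rw [show Finset.univ.filter (fun u : {p // p ∈ C} => κ u = none) = s from rfl,
      ← Finset.prod_filter_mul_prod_filter_not s p f,
      ← Finset.prod_filter_mul_prod_filter_not s p' f']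
    have hforced : (s.filter p).prod f = (s.filter p').prod f' :=
      Finset.prod_nbij' (nxt κ) (prv κ) hmapi hmapj hleft hright hfac
    have hcard : (s.filter p).card = (s.filter p').card :=
      Finset.card_bij' (fun u _ => nxt κ u) (fun v _ => prv κ v) hmapi hmapj hleft hright
    have hcard' : (s.filter fun u => ¬p u).card = (s.filter fun u => ¬p' u).card := by
      have e1 := Finset.card_filter_add_card_filter_not (s := s) p
      have e2 := Finset.card_filter_add_card_filter_not (s := s) p'
      omega
    set K : A := wFact prm' x y a rf 0 + wFact prm' x y a sf 0 with hK
    have hfree : (s.filter fun u => ¬p u).prod f = K ^ (s.filter fun u => ¬p u).card := by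
      rw [← Finset.prod_const]
      refine Finset.prod_congr rfl fun u hu => ?_
      simp only [hs, hp, Finset.mem_filter, Finset.mem_univ, true_and, not_or] at hu
      obtain ⟨hku, hrt, hab⟩ := hu
      rw [hf]
      simp only
      rw [alw_of_none (frcP_free rf sf hku hrt hab), Finset.sum_pair hc.rf_ne_sf]
      exact hc.wFact_pair x y a (content u.1) 0
    have hfree' : (s.filter fun u => ¬p' u).prod f' = K ^ (s.filter fun u => ¬p' u).card := by
      rw [← Finset.prod_const]
      refine Finset.prod_congr rfl fun u hu => ?_
      simp only [hs, hp', Finset.mem_filter, Finset.mem_univ, true_and, not_or] at hu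
      obtain ⟨hku, hlt, hbw⟩ := hu
      rw [hf']
      simp only
      rw [alw'_of_none (frcP'_free rf sf hku hlt hbw), Finset.sum_pair hc.rf_ne_sf]
      exact (hc.wFact_pair x y a 0 (content u.1)).symm.trans (hc.wFact_pair x y a 0 0)
    rw [hforced, hfree, hfree', hcard']
  rw [houter, hinner]

open Classical in
theorem fiber_sum_eq {A : Type*} [CommRing A] {m n : ℕ}
    (hc : SwapCtx prm prm' rf sf)
    (hRow : ∀ i j1 j2 j, (i, j1) ∈ C → (i, j2) ∈ C → j1 ≤ j → j ≤ j2 → (i, j) ∈ C)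
    (hCol : ∀ i1 i2 i j, (i1, j) ∈ C → (i2, j) ∈ C → i1 ≤ i → i ≤ i2 → (i, j) ∈ C)
    (hSW : ∀ i j, (i, j) ∈ C → (i + 1, j + 1) ∈ C → (i + 1, j) ∈ C)
    (hNE : ∀ i j, (i, j) ∈ C → (i + 1, j + 1) ∈ C → (i, j + 1) ∈ C)
    (κ : {p // p ∈ C} → Option (Fin NA))
    (x : Fin m → A) (y : Fin n → A) (a : ℤ → A) :
    (∑ T ∈ Finset.univ.filter
        (fun T : {p // p ∈ C} → Fin NA => IsSuperTab C prm T ∧ okey rf sf T = κ),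
      ∏ u : {p // p ∈ C}, wFact prm x y a (T u) (content u.1))
    = ∑ T ∈ Finset.univ.filter
        (fun T : {p // p ∈ C} → Fin NA => IsSuperTab C prm' T ∧ okey rf sf T = κ),
      ∏ u : {p // p ∈ C}, wFact prm' x y a (T u) (content u.1) := by
  classical
  by_cases hg : GoodKey prm rf sf C κ
  · have e1 : Finset.univ.filter
        (fun T : {p // p ∈ C} → Fin NA => IsSuperTab C prm T ∧ okey rf sf T = κ)
        = Fintype.piFinset (alw rf sf κ) := by
      ext T
      rw [Fintype.mem_piFinset, Finset.mem_filter]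
      simp only [Finset.mem_univ, true_and]
      exact supertab_iff_prm hc hRow hCol hg T
    have e2 : Finset.univ.filter
        (fun T : {p // p ∈ C} → Fin NA => IsSuperTab C prm' T ∧ okey rf sf T = κ)
        = Fintype.piFinset (alw' rf sf κ) := by
      ext T
      rw [Fintype.mem_piFinset, Finset.mem_filter]
      simp only [Finset.mem_univ, true_and]
      exact supertab_iff_prm' hc hRow hCol hg T
    rw [e1, e2,
      ← Finset.prod_univ_sum (alw rf sf κ) (fun u t => wFact prm x y a t (content u.1)),
      ← Finset.prod_univ_sum (alw' rf sf κ) (fun u t => wFact prm' x y a t (content u.1))]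
    exact prod_alw_eq hc hg x y a
  · have e1 : Finset.univ.filter
        (fun T : {p // p ∈ C} → Fin NA => IsSuperTab C prm T ∧ okey rf sf T = κ) = ∅ := by
      rw [Finset.filter_eq_empty_iff]
      rintro T - ⟨h1, h2⟩
      exact hg (h2 ▸ good_of_prm hc hSW h1)
    have e2 : Finset.univ.filter
        (fun T : {p // p ∈ C} → Fin NA => IsSuperTab C prm' T ∧ okey rf sf T = κ) = ∅ := by
      rw [Finset.filter_eq_empty_iff]
      rintro T - ⟨h1, h2⟩
      exact hg (h2 ▸ good_of_prm' hc hNE h1)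
    rw [e1, e2]
    simp

end FiberAux

end AdjacentSwapAux


/-- **Cyclic-map invariance under an adjacent unprimed–primed swap**: if in the marked
alphabet `R′` the letter `r` is unprimed and the letter `r + 1` is primed, and `R″` is
obtained from `R′` by instead taking `r` primed and `r + 1` unprimed (all other letters
retaining their markings), then the factorial supersymmetric skew Schur functions for
`R′` and `R″` coincide. -/
theorem adjacent_swap_invariance (m n : ℕ) (prm : Fin (m + n) → Bool)
    (hprm : (Finset.univ.filter fun r => prm r = true).card = n)
    (r : Fin (m + n)) (hr : (r : ℕ) + 1 < m + n)
    (hru : prm r = false) (hrp : prm ⟨(r : ℕ) + 1, hr⟩ = true)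
    (prm' : Fin (m + n) → Bool)
    (hprm' : prm' = fun r' =>
      if r' = r then true else if (r' : ℕ) = (r : ℕ) + 1 then false else prm r')
    (lam mu : List ℕ) (hlam : IsPartition lam) (hmu : IsPartition mu)
    (hsub : Contained mu lam)
    (x : Fin m → A) (y : Fin n → A) (a : ℤ → A) :
    tabSum (cells lam mu) prm (wFact prm x y a) =
      tabSum (cells lam mu) prm' (wFact prm' x y a) := by
  classical
  set sf : Fin (m + n) := ⟨(r : ℕ) + 1, hr⟩ with hsf
  have hrsf : (r : ℕ) + 1 = (sf : ℕ) := rfl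
  have hc : SwapCtx prm prm' r sf := by
    refine ⟨hrsf, hru, hrp, ?_, ?_, ?_⟩
    · rw [hprm']; simp
    · rw [hprm']
      have h1 : sf ≠ r := by
        intro h
        have := congrArg Fin.val h
        simp [hsf] at this
      simp [h1, hsf, Fin.ext_iff]
    · intro t h1 h2
      rw [hprm']
      have e1 : (t : ℕ) ≠ (r : ℕ) + 1 := by
        intro h
        exact h2 (Fin.ext (by rw [h]))
      simp [h1, e1]
  have hRow := fun i j1 j2 j h1 h2 h3 h4 =>
    cells_rowConvex (lam := lam) (mu := mu) (i := i) (j1 := j1) (j2 := j2) (j := j) h1 h2 h3 h4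
  have hCol := fun i1 i2 i j h1 h2 h3 h4 =>
    cells_colConvex hlam.1 hmu.1 (i1 := i1) (i2 := i2) (i := i) (j := j) h1 h2 h3 h4
  have hSW := fun i j h1 h2 =>
    cells_swClosed (lam := lam) (mu := mu) hmu.1 (i := i) (j := j) h1 h2
  have hNE := fun i j h1 h2 =>
    cells_neClosed (lam := lam) (mu := mu) hlam.1 (i := i) (j := j) h1 h2
  simp only [tabSum]
  rw [← Finset.sum_fiberwise
      (Finset.univ.filter fun T : {p // p ∈ cells lam mu} → Fin (m + n) =>
        IsSuperTab (cells lam mu) prm T) (okey r sf)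
      (fun T => ∏ u : {p // p ∈ cells lam mu}, wFact prm x y a (T u) (content u.1)),
    ← Finset.sum_fiberwise
      (Finset.univ.filter fun T : {p // p ∈ cells lam mu} → Fin (m + n) =>
        IsSuperTab (cells lam mu) prm' T) (okey r sf)
      (fun T => ∏ u : {p // p ∈ cells lam mu}, wFact prm' x y a (T u) (content u.1))]
  refine Finset.sum_congr rfl fun κ _ => ?_
  rw [Finset.filter_filter, Finset.filter_filter]
  exact fiber_sum_eq hc hRow hCol hSW hNE κ x y a

end SuperSchur
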